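/- arXiv:2112.07537 — 11 statements merged into one kernel-verified Lean document; each statement's English description precedes it below -/
import Mathlib

section
/- Let h > 0 and let f : ℝ → ℝ be four times continuously differentiable on the interval [x - h, x + 2h]. Then |f(x + h/2) - ( -(1/16)·f(x - h) + (9/16)·f(x) + (9/16)·f(x + h) - (1/16)·f(x + 2h) )| ≤ (3/128)·h⁴·sup_{t ∈ [x-h, x+2h]} |f⁽⁴⁾(t)|. (Detail-coefficient bound of order h^N with N = 4 for the fourth-order interpolating wavelet.) -/
set_option maxHeartbeats 1000000
open Set Polynomial Finset

lemma idw_nhds {n : ℕ} {f : ℝ → ℝ} {s : Set ℝ} {x : ℝ} (hs : s ∈ nhds x) :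
    iteratedDerivWithin n f s x = iteratedDeriv n f x := by
  rw [iteratedDerivWithin, iteratedDeriv, ← iteratedFDerivWithin_univ,
    ← Set.univ_inter s, iteratedFDerivWithin_inter hs]

lemma deriv_sub_poly {F : ℝ → ℝ} {U : Set ℝ} (hU : IsOpen U) (hF : DifferentiableOn ℝ F U)
    (p : Polynomial ℝ) {G : ℝ → ℝ} (hG : Set.EqOn G (fun t => F t - p.eval t) U) :
    Set.EqOn (deriv G) (fun t => deriv F t - (Polynomial.derivative p).eval t) U := by
  intro t ht
  have hFt : DifferentiableAt ℝ F t := hF.differentiableAt (hU.mem_nhds ht)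
  have hev : G =ᶠ[nhds t] fun u => F u - p.eval u :=
    Filter.eventuallyEq_of_mem (hU.mem_nhds ht) hG
  rw [hev.deriv_eq, deriv_fun_sub hFt (Polynomial.differentiableAt p)]
  simp [Polynomial.deriv]

/-- Detail-coefficient bound of order `h^4` for the fourth-order interpolating
wavelet: the deviation of a sample at a dyadic midpoint from the `N = 4`
Deslauriers–Dubuc prediction is bounded by `(3/128) h⁴ sup |f⁽⁴⁾|`. -/
theorem detail_bound_order_four
    (f : ℝ → ℝ) (x h : ℝ) (hh : 0 < h)
    (hf : ContDiffOn ℝ 4 f (Set.Icc (x - h) (x + 2 * h))) :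
    |f (x + h / 2) -
        (-(1 / 16) * f (x - h) + (9 / 16) * f x + (9 / 16) * f (x + h)
          - (1 / 16) * f (x + 2 * h))| ≤
      (3 / 128) * h ^ 4 *
        ⨆ t ∈ Set.Icc (x - h) (x + 2 * h),
          |iteratedDerivWithin 4 f (Set.Icc (x - h) (x + 2 * h)) t| := by
  set a := x - h with ha
  set c := x + h / 2 with hc
  set t3 := x + h with ht3
  set b := x + 2 * h with hb
  set S : Finset ℝ := {a, x, c, t3, b} with hS
  set P : Polynomial ℝ := Lagrange.interpolate S id f with hP
  have hinj : Set.InjOn id (S : Set ℝ) := Function.injective_id.injOn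
  have hcard : (#S : ℕ) ≤ 5 := by
    refine (Finset.card_insert_le _ _).trans (Nat.succ_le_succ ?_)
    refine (Finset.card_insert_le _ _).trans (Nat.succ_le_succ ?_)
    refine (Finset.card_insert_le _ _).trans (Nat.succ_le_succ ?_)
    refine (Finset.card_insert_le _ _).trans (Nat.succ_le_succ ?_)
    simp
  have hdeg : P.natDegree ≤ 4 := by
    rw [Polynomial.natDegree_le_iff_degree_le]
    refine (Lagrange.degree_interpolate_le _ hinj).trans ?_
    exact_mod_cast Nat.cast_le.mpr (by omega : #S - 1 ≤ 4)
  have hdeg5 : P.natDegree < 5 := by omega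
  have heval : ∀ t : ℝ, P.eval t =
      P.coeff 0 + P.coeff 1 * t + P.coeff 2 * t ^ 2 + P.coeff 3 * t ^ 3 + P.coeff 4 * t ^ 4 := by
    intro t
    rw [Polynomial.eval_eq_sum_range' hdeg5]
    simp [Finset.sum_range_succ]
  have hnode : ∀ t ∈ S, P.eval t = f t := fun t ht =>
    Lagrange.eval_interpolate_at_node f hinj ht
  have hfa : f a = P.eval a := (hnode a (by simp [hS])).symm
  have hfx : f x = P.eval x := (hnode x (by simp [hS])).symm
  have hfc : f c = P.eval c := (hnode c (by simp [hS])).symm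
  have hft3 : f t3 = P.eval t3 := (hnode t3 (by simp [hS])).symm
  have hfb : f b = P.eval b := (hnode b (by simp [hS])).symm
  have key : f c - (-(1 / 16) * f a + (9 / 16) * f x + (9 / 16) * f t3 - (1 / 16) * f b)
      = P.coeff 4 * (9 / 16 * h ^ 4) := by
    rw [hfa, hfx, hfc, hft3, hfb, heval, heval, heval, heval, heval, ha, hc, ht3, hb]
    ring
  -- the difference function
  set g : ℝ → ℝ := fun t => f t - P.eval t with hg
  have hgc : ContinuousOn g (Set.Icc a b) :=
    hf.continuousOn.sub (P.continuousOn)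
  have haxb : a < x ∧ x < c ∧ c < t3 ∧ t3 < b := by
    refine ⟨?_, ?_, ?_, ?_⟩ <;> simp [ha, hc, ht3, hb] <;> linarith
  obtain ⟨h1, h2, h3, h4⟩ := haxb
  have hicc : ∀ p q : ℝ, a ≤ p → q ≤ b → Set.Icc p q ⊆ Set.Icc a b := fun p q hp hq =>
    Set.Icc_subset_Icc hp hq
  have ga : g a = 0 := by simp [hg, hfa]
  have gx : g x = 0 := by simp [hg, hfx]
  have gc : g c = 0 := by simp [hg, hfc]
  have gt3 : g t3 = 0 := by simp [hg, hft3]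
  have gb : g b = 0 := by simp [hg, hfb]
  -- Rolle level 1
  obtain ⟨s1, hs1, z1⟩ := exists_deriv_eq_zero h1 (hgc.mono (hicc _ _ le_rfl (by linarith)))
    (ga.trans gx.symm)
  obtain ⟨s2, hs2, z2⟩ := exists_deriv_eq_zero h2 (hgc.mono (hicc _ _ (by linarith) (by linarith)))
    (gx.trans gc.symm)
  obtain ⟨s3, hs3, z3⟩ := exists_deriv_eq_zero h3 (hgc.mono (hicc _ _ (by linarith) (by linarith)))
    (gc.trans gt3.symm)
  obtain ⟨s4, hs4, z4⟩ := exists_deriv_eq_zero h4 (hgc.mono (hicc _ _ (by linarith) le_rfl))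
    (gt3.trans gb.symm)
  obtain ⟨hs1a, hs1b⟩ := hs1; obtain ⟨hs2a, hs2b⟩ := hs2
  obtain ⟨hs3a, hs3b⟩ := hs3; obtain ⟨hs4a, hs4b⟩ := hs4
  -- open set machinery
  set U : Set ℝ := Set.Ioo a b with hUdef
  have hU : IsOpen U := isOpen_Ioo
  have hf0 : ContDiffOn ℝ 4 f U := hf.mono Set.Ioo_subset_Icc_self
  have hf1 : ContDiffOn ℝ 3 (deriv f) U := hf0.deriv_of_isOpen hU (by norm_num)
  have hf2 : ContDiffOn ℝ 2 (deriv (deriv f)) U := hf1.deriv_of_isOpen hU (by norm_num)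
  have hf3 : ContDiffOn ℝ 1 (deriv (deriv (deriv f))) U := hf2.deriv_of_isOpen hU (by norm_num)
  have e0 : Set.EqOn g (fun t => f t - P.eval t) U := fun t _ => rfl
  have e1 := deriv_sub_poly hU (hf0.differentiableOn (by norm_num)) P e0
  have e2 := deriv_sub_poly hU (hf1.differentiableOn (by norm_num)) P.derivative e1
  have e3 := deriv_sub_poly hU (hf2.differentiableOn (by norm_num)) P.derivative.derivative e2
  have e4 := deriv_sub_poly hU (hf3.differentiableOn (by norm_num))
    P.derivative.derivative.derivative e3
  have c1 : ContinuousOn (deriv g) U :=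
    (hf1.continuousOn.sub (Polynomial.continuousOn _)).congr e1
  have c2 : ContinuousOn (deriv (deriv g)) U :=
    (hf2.continuousOn.sub (Polynomial.continuousOn _)).congr e2
  have c3 : ContinuousOn (deriv (deriv (deriv g))) U :=
    (hf3.continuousOn.sub (Polynomial.continuousOn _)).congr e3
  have hsubU : ∀ p q : ℝ, a < p → q < b → Set.Icc p q ⊆ U := fun p q hp hq =>
    Set.Icc_subset_Ioo hp hq
  -- level 2
  obtain ⟨u1, hu1, y1⟩ := exists_deriv_eq_zero (show s1 < s2 by linarith)
    (c1.mono (hsubU _ _ (by linarith) (by linarith))) (z1.trans z2.symm)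
  obtain ⟨u2, hu2, y2⟩ := exists_deriv_eq_zero (show s2 < s3 by linarith)
    (c1.mono (hsubU _ _ (by linarith) (by linarith))) (z2.trans z3.symm)
  obtain ⟨u3, hu3, y3⟩ := exists_deriv_eq_zero (show s3 < s4 by linarith)
    (c1.mono (hsubU _ _ (by linarith) (by linarith))) (z3.trans z4.symm)
  obtain ⟨hu1a, hu1b⟩ := hu1; obtain ⟨hu2a, hu2b⟩ := hu2; obtain ⟨hu3a, hu3b⟩ := hu3
  -- level 3
  obtain ⟨v1, hv1, x1⟩ := exists_deriv_eq_zero (show u1 < u2 by linarith)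
    (c2.mono (hsubU _ _ (by linarith) (by linarith))) (y1.trans y2.symm)
  obtain ⟨v2, hv2, x2⟩ := exists_deriv_eq_zero (show u2 < u3 by linarith)
    (c2.mono (hsubU _ _ (by linarith) (by linarith))) (y2.trans y3.symm)
  obtain ⟨hv1a, hv1b⟩ := hv1; obtain ⟨hv2a, hv2b⟩ := hv2
  -- level 4
  obtain ⟨w, hw, zw⟩ := exists_deriv_eq_zero (show v1 < v2 by linarith)
    (c3.mono (hsubU _ _ (by linarith) (by linarith))) (x1.trans x2.symm)
  obtain ⟨hwa, hwb⟩ := hw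
  have hwU : w ∈ U := ⟨by linarith, by linarith⟩
  -- P'''' is the constant 24 * coeff 4
  set Q := P.derivative.derivative.derivative.derivative with hQ
  have hQdeg : Q.natDegree ≤ 0 := by
    have d1 : P.derivative.natDegree ≤ 3 := (natDegree_derivative_le P).trans (by omega)
    have d2 : P.derivative.derivative.natDegree ≤ 2 :=
      (natDegree_derivative_le _).trans (by omega)
    have d3 : P.derivative.derivative.derivative.natDegree ≤ 1 :=
      (natDegree_derivative_le _).trans (by omega)
    exact (natDegree_derivative_le _).trans (by omega)
  have hQev : Q.eval w = Q.coeff 0 := by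
    rw [Polynomial.eval_eq_sum_range' (Nat.lt_succ_of_le hQdeg)]
    simp
  have hQc : Q.coeff 0 = 24 * P.coeff 4 := by
    have k1 : P.derivative.coeff 3 = P.coeff 4 * 4 := by
      rw [Polynomial.coeff_derivative]; norm_num
    have k2 : P.derivative.derivative.coeff 2 = P.derivative.coeff 3 * 3 := by
      rw [Polynomial.coeff_derivative]; norm_num
    have k3 : P.derivative.derivative.derivative.coeff 1 =
        P.derivative.derivative.coeff 2 * 2 := by
      rw [Polynomial.coeff_derivative]; norm_num
    have k4 : Q.coeff 0 = P.derivative.derivative.derivative.coeff 1 * 1 := by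
      rw [hQ, Polynomial.coeff_derivative]; norm_num
    rw [k4, k3, k2, k1]; ring
  have hfw : deriv (deriv (deriv (deriv f))) w = 24 * P.coeff 4 := by
    have := e4 hwU
    simp only at this
    rw [zw] at this
    have h0 : (0:ℝ) = deriv (deriv (deriv (deriv f))) w - Q.eval w := this
    rw [hQev, hQc] at h0
    linarith
  -- relate to iteratedDerivWithin
  have hIccN : Set.Icc a b ∈ nhds w := by
    refine Filter.mem_of_superset (hU.mem_nhds hwU) Set.Ioo_subset_Icc_self
  have hidw : iteratedDerivWithin 4 f (Set.Icc a b) w = 24 * P.coeff 4 := by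
    rw [idw_nhds hIccN, iteratedDeriv_eq_iterate]
    show deriv^[4] f w = _
    rw [show deriv^[4] f = deriv (deriv (deriv (deriv f))) by
      simp only [Function.iterate_succ_apply', Function.iterate_zero_apply]]
    exact hfw
  -- final bound via the sup
  have hwmem : w ∈ Set.Icc a b := Set.Ioo_subset_Icc_self ⟨by linarith, by linarith⟩
  have hcont : ContinuousOn (iteratedDerivWithin 4 f (Set.Icc a b)) (Set.Icc a b) :=
    hf.continuousOn_iteratedDerivWithin (by exact_mod_cast le_rfl)
      (uniqueDiffOn_Icc (by linarith : a < b))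
  obtain ⟨M, hM⟩ := (isCompact_Icc).exists_bound_of_continuousOn hcont
  set F : ℝ → ℝ := fun t => ⨆ _ : t ∈ Set.Icc a b, |iteratedDerivWithin 4 f (Set.Icc a b) t|
    with hF
  have hub : ∀ t, F t ≤ max M 0 := by
    intro t
    by_cases ht : t ∈ Set.Icc a b
    · simp only [hF]
      rw [ciSup_pos ht]
      exact le_max_of_le_left (hM t ht)
    · simp only [hF]
      rw [ciSup_neg ht, Real.sSup_empty]
      exact le_max_right _ _
  have hbdd : BddAbove (Set.range F) := ⟨max M 0, by rintro _ ⟨t, rfl⟩; exact hub t⟩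
  have hle : |iteratedDerivWithin 4 f (Set.Icc a b) w| ≤ ⨆ t, F t := by
    have hFw : F w = |iteratedDerivWithin 4 f (Set.Icc a b) w| := by
      simp only [hF]
      exact ciSup_pos hwmem
    rw [← hFw]
    exact le_ciSup hbdd w
  have hdetail : f c - (-(1 / 16) * f a + (9 / 16) * f x + (9 / 16) * f t3 - (1 / 16) * f b)
      = iteratedDerivWithin 4 f (Set.Icc a b) w / 24 * (9 / 16 * h ^ 4) := by
    rw [key, hidw]; ring
  rw [hdetail]
  have habs : |iteratedDerivWithin 4 f (Set.Icc a b) w / 24 * (9 / 16 * h ^ 4)|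
      = 3 / 128 * h ^ 4 * |iteratedDerivWithin 4 f (Set.Icc a b) w| := by
    rw [abs_mul, abs_div, abs_of_nonneg (by positivity : (0:ℝ) ≤ 9 / 16 * h ^ 4)]
    rw [abs_of_nonneg (by norm_num : (0:ℝ) ≤ (24:ℝ))]
    ring
  rw [habs]
  exact mul_le_mul_of_nonneg_left hle (by positivity)
end

section
/- Let h > 0 and let f : ℝ → ℝ be six times continuously differentiable on the interval [x - 2h, x + 3h]. Then |f(x + h/2) - ( (3/256)·f(x - 2h) - (25/256)·f(x - h) + (75/128)·f(x) + (75/128)·f(x + h) - (25/256)·f(x + 2h) + (3/256)·f(x + 3h) )| ≤ (5/1024)·h⁶·sup_{t ∈ [x-2h, x+3h]} |f⁽⁶⁾(t)|. (Detail-coefficient bound of order h^N with N = 6 for the sixth-order interpolating wavelet.) -/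
open Set MeasureTheory intervalIntegral

/-- Integral of a shifted quintic monomial. -/
lemma integ5 (s p q : ℝ) :
    (∫ t in p..q, (s - t) ^ 5) = ((s - p) ^ 6 - (s - q) ^ 6) / 6 := by
  have hder : ∀ t ∈ uIcc p q, HasDerivAt (fun y => -((s - y) ^ 6) / 6) ((s - t) ^ 5) t := by
    intro t _
    have := (monomial_has_deriv_aux t s 5).neg.div_const 6
    refine this.congr_deriv ?_
    push_cast
    ring
  have hint : IntervalIntegrable (fun t => (s - t) ^ 5) volume p q :=
    (Continuous.intervalIntegrable (by continuity) p q)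
  rw [intervalIntegral.integral_eq_sub_of_hasDerivAt hder hint]
  ring

/-- Taylor's theorem with integral remainder (order 5, on `Icc A B`, with the
kernel written using `max` so that the integral extends over all of `[A, B]`). -/
lemma taylor_int {f : ℝ → ℝ} {A B : ℝ} (hAB : A < B)
    (hf : ContDiffOn ℝ 6 f (Icc A B)) (s : ℝ) (hs : s ∈ Icc A B) :
    f s = taylorWithinEval f 5 (Icc A B) A s +
      (120 : ℝ)⁻¹ * ∫ t in A..B,
        max (s - t) 0 ^ 5 * iteratedDerivWithin 6 f (Icc A B) t := by
  set I := Icc A B with hI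
  set D := iteratedDerivWithin 6 f I with hD
  have hunique : UniqueDiffOn ℝ I := uniqueDiffOn_Icc hAB
  have hDc : ContinuousOn D I :=
    hf.continuousOn_iteratedDerivWithin (by norm_cast) hunique
  have hmaxc : Continuous fun t : ℝ => max (s - t) 0 ^ 5 := by continuity
  have hzero : (∫ t in s..B, max (s - t) 0 ^ 5 * D t) = 0 := by
    have heq : EqOn (fun t => max (s - t) 0 ^ 5 * D t) (fun _ => (0 : ℝ)) (uIcc s B) := by
      intro t ht
      rw [uIcc_of_le hs.2] at ht
      have : max (s - t) 0 = 0 := max_eq_right (by linarith [ht.1])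
      simp [this]
    rw [intervalIntegral.integral_congr heq, intervalIntegral.integral_zero]
  have hi1 : IntervalIntegrable (fun t => max (s - t) 0 ^ 5 * D t) volume A s := by
    apply ContinuousOn.intervalIntegrable
    rw [uIcc_of_le hs.1]
    exact hmaxc.continuousOn.mul (hDc.mono (Icc_subset_Icc_right hs.2))
  have hi2 : IntervalIntegrable (fun t => max (s - t) 0 ^ 5 * D t) volume s B := by
    apply ContinuousOn.intervalIntegrable
    rw [uIcc_of_le hs.2]
    exact hmaxc.continuousOn.mul (hDc.mono (Icc_subset_Icc_left hs.1))
  have hsplit := intervalIntegral.integral_add_adjacent_intervals hi1 hi2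
  rcases eq_or_lt_of_le hs.1 with rfl | hAs
  · have hz2 : (∫ t in A..B, max (A - t) 0 ^ 5 * D t) = 0 := by
      rw [← hsplit, intervalIntegral.integral_same, hzero]; ring
    rw [hz2, taylorWithinEval_self]
    ring
  · -- FTC on `[A, s]`
    have hf5 : ContDiffOn ℝ 5 f I := hf.of_le (by norm_cast)
    have hf5' : DifferentiableOn ℝ (iteratedDerivWithin 5 f I) (Ioo A B) :=
      (hf.differentiableOn_iteratedDerivWithin (by norm_cast)
        hunique).mono Ioo_subset_Icc_self
    have hcont : ContinuousOn (fun y => taylorWithinEval f 5 I y s) (Icc A s) :=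
      (continuousOn_taylorWithinEval hunique hf5).mono (Icc_subset_Icc_right hs.2)
    have hderiv : ∀ t ∈ Ioo A s,
        HasDerivWithinAt (fun y => taylorWithinEval f 5 I y s)
          ((120 : ℝ)⁻¹ * ((s - t) ^ 5 * D t)) (Ioi t) t := by
      intro t ht
      have htB : t ∈ Ioo A B := ⟨ht.1, lt_of_lt_of_le ht.2 hs.2⟩
      have := (taylorWithinEval_hasDerivAt_Ioo s hAB htB hf5 hf5').hasDerivWithinAt
        (s := Ioi t)
      refine this.congr_deriv ?_
      rw [smul_eq_mul]
      norm_num [Nat.factorial]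
      ring
    have hint : IntervalIntegrable (fun t => (120 : ℝ)⁻¹ * ((s - t) ^ 5 * D t)) volume A s := by
      apply ContinuousOn.intervalIntegrable
      rw [uIcc_of_le hs.1]
      exact (continuousOn_const.mul (((by continuity : Continuous fun t : ℝ => (s - t) ^ 5).continuousOn).mul
        (hDc.mono (Icc_subset_Icc_right hs.2))))
    have hftc := intervalIntegral.integral_eq_sub_of_hasDeriv_right_of_le hAs.le hcont hderiv hint
    rw [taylorWithinEval_self] at hftc
    have hpull : (∫ t in A..s, (120 : ℝ)⁻¹ * ((s - t) ^ 5 * D t))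
        = (120 : ℝ)⁻¹ * ∫ t in A..s, (s - t) ^ 5 * D t := by
      exact intervalIntegral.integral_const_mul _ _
    have hcongr : (∫ t in A..s, (s - t) ^ 5 * D t)
        = ∫ t in A..s, max (s - t) 0 ^ 5 * D t := by
      apply intervalIntegral.integral_congr
      intro t ht
      rw [uIcc_of_le hs.1] at ht
      show (s - t) ^ 5 * D t = max (s - t) 0 ^ 5 * D t
      rw [max_eq_left (by linarith [ht.2] : (0:ℝ) ≤ s - t)]
    rw [hpull, hcongr] at hftc
    rw [← hsplit, hzero, add_zero]
    linarith [hftc]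

set_option maxHeartbeats 4000000 in
/-- Detail-coefficient bound of order `h^6` for the sixth-order interpolating
wavelet: the deviation of a sample at a dyadic midpoint from the `N = 6`
Deslauriers–Dubuc prediction is bounded by `(5/1024) h⁶ sup |f⁽⁶⁾|`. -/
theorem detail_bound_order_six
    (f : ℝ → ℝ) (x h : ℝ) (hh : 0 < h)
    (hf : ContDiffOn ℝ 6 f (Set.Icc (x - 2 * h) (x + 3 * h))) :
    |f (x + h / 2) -
        ((3 / 256) * f (x - 2 * h) - (25 / 256) * f (x - h) + (75 / 128) * f x
          + (75 / 128) * f (x + h) - (25 / 256) * f (x + 2 * h)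
          + (3 / 256) * f (x + 3 * h))| ≤
      (5 / 1024) * h ^ 6 *
        ⨆ t ∈ Set.Icc (x - 2 * h) (x + 3 * h),
          |iteratedDerivWithin 6 f (Set.Icc (x - 2 * h) (x + 3 * h)) t| := by
  set A := x - 2 * h with hA
  set B := x + 3 * h with hB
  set I := Icc A B with hI
  set D := iteratedDerivWithin 6 f I with hDdef
  set M := ⨆ t ∈ I, |D t| with hM
  have hAB : A < B := by simp only [hA, hB]; linarith
  have hunique : UniqueDiffOn ℝ I := uniqueDiffOn_Icc hAB
  have hDc : ContinuousOn D I :=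
    hf.continuousOn_iteratedDerivWithin (by norm_cast) hunique
  -- sup bounds
  obtain ⟨C0, hC0⟩ := isCompact_Icc.exists_bound_of_continuousOn hDc
  have hbdd : BddAbove (Set.range fun t => ⨆ (_ : t ∈ I), |D t|) := by
    refine ⟨max C0 0, ?_⟩
    rintro _ ⟨t, rfl⟩
    show (⨆ (_ : t ∈ I), |D t|) ≤ max C0 0
    by_cases ht : t ∈ I
    · rw [ciSup_pos ht]
      exact le_max_of_le_left (by simpa using hC0 t ht)
    · haveI : IsEmpty (t ∈ I) := isEmpty_Prop.mpr ht
      rw [Real.iSup_of_isEmpty]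
      exact le_max_right _ _
  have hMb : ∀ t ∈ I, |D t| ≤ M := by
    intro t ht
    have := le_ciSup hbdd t
    rwa [ciSup_pos ht] at this
  -- the kernel
  set K : ℝ → ℝ := fun t =>
    max (x + h / 2 - t) 0 ^ 5 - 3 / 256 * max (A - t) 0 ^ 5
      + 25 / 256 * max (x - h - t) 0 ^ 5 - 75 / 128 * max (x - t) 0 ^ 5
      - 75 / 128 * max (x + h - t) 0 ^ 5 + 25 / 256 * max (x + 2 * h - t) 0 ^ 5
      - 3 / 256 * max (B - t) 0 ^ 5 with hK
  have cmax : ∀ s : ℝ, Continuous fun t : ℝ => max (s - t) 0 ^ 5 := fun s =>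
    ((continuous_const.sub continuous_id).max continuous_const).pow 5
  have hKc : Continuous K := by
    simp only [hK]
    exact ((((((cmax _).sub (continuous_const.mul (cmax _))).add
      (continuous_const.mul (cmax _))).sub (continuous_const.mul (cmax _))).sub
      (continuous_const.mul (cmax _))).add (continuous_const.mul (cmax _))).sub
      (continuous_const.mul (cmax _))
  -- Taylor expansions at the seven points
  set T : ℝ → ℝ := fun s => taylorWithinEval f 5 I A s with hT
  set S : ℝ → ℝ := fun s => ∫ t in A..B, max (s - t) 0 ^ 5 * D t with hS
  have htay : ∀ s ∈ I, f s = T s + (120 : ℝ)⁻¹ * S s := fun s hs =>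
    taylor_int hAB hf s hs
  have mem_m : x + h / 2 ∈ I := by constructor <;> (simp only [hA, hB]; linarith)
  have mem_A : A ∈ I := by constructor <;> (simp only [hA, hB]; linarith)
  have mem_a1 : x - h ∈ I := by constructor <;> (simp only [hA, hB]; linarith)
  have mem_a2 : x ∈ I := by constructor <;> (simp only [hA, hB]; linarith)
  have mem_a3 : x + h ∈ I := by constructor <;> (simp only [hA, hB]; linarith)
  have mem_a4 : x + 2 * h ∈ I := by constructor <;> (simp only [hA, hB]; linarith)
  have mem_B : B ∈ I := by constructor <;> (simp only [hA, hB]; linarith)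
  -- the Taylor polynomial part cancels (exactness on degree ≤ 5)
  have hT0 : T (x + h / 2) - (3 / 256 * T A - 25 / 256 * T (x - h) + 75 / 128 * T x
      + 75 / 128 * T (x + h) - 25 / 256 * T (x + 2 * h) + 3 / 256 * T B) = 0 := by
    simp only [hT, taylor_within_apply, Finset.sum_range_succ, Finset.sum_range_zero,
      smul_eq_mul, hA, hB]
    norm_num [Nat.factorial]
    ring
  -- the error as a kernel integral
  have hE : f (x + h / 2) -
      ((3 / 256) * f (x - 2 * h) - (25 / 256) * f (x - h) + (75 / 128) * f x
        + (75 / 128) * f (x + h) - (25 / 256) * f (x + 2 * h)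
        + (3 / 256) * f (x + 3 * h)) =
      (120 : ℝ)⁻¹ * (S (x + h / 2) - 3 / 256 * S A + 25 / 256 * S (x - h)
        - 75 / 128 * S x - 75 / 128 * S (x + h) + 25 / 256 * S (x + 2 * h)
        - 3 / 256 * S B) := by
    have e1 := htay _ mem_m
    have e2 := htay _ mem_A
    have e3 := htay _ mem_a1
    have e4 := htay _ mem_a2
    have e5 := htay _ mem_a3
    have e6 := htay _ mem_a4
    have e7 := htay _ mem_B
    rw [show x - 2 * h = A from rfl, show x + 3 * h = B from rfl]
    rw [e1, e2, e3, e4, e5, e6, e7]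
    linear_combination hT0
  -- integrability helpers
  have ii : ∀ s : ℝ, IntervalIntegrable (fun t => max (s - t) 0 ^ 5 * D t) volume A B := by
    intro s
    apply ContinuousOn.intervalIntegrable
    rw [uIcc_of_le hAB.le]
    exact (cmax s).continuousOn.mul hDc
  have iKD : IntervalIntegrable (fun t => K t * D t) volume A B := by
    apply ContinuousOn.intervalIntegrable
    rw [uIcc_of_le hAB.le]
    exact hKc.continuousOn.mul hDc
  -- linearity: the kernel integral equals the S-combination
  have hKD : (∫ t in A..B, K t * D t) =
      S (x + h / 2) - 3 / 256 * S A + 25 / 256 * S (x - h)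
        - 75 / 128 * S x - 75 / 128 * S (x + h) + 25 / 256 * S (x + 2 * h)
        - 3 / 256 * S B := by
    have expand : (fun t => K t * D t) = fun t =>
        (max (x + h / 2 - t) 0 ^ 5 * D t) - 3 / 256 * (max (A - t) 0 ^ 5 * D t)
          + 25 / 256 * (max (x - h - t) 0 ^ 5 * D t) - 75 / 128 * (max (x - t) 0 ^ 5 * D t)
          - 75 / 128 * (max (x + h - t) 0 ^ 5 * D t)
          + 25 / 256 * (max (x + 2 * h - t) 0 ^ 5 * D t)
          - 3 / 256 * (max (B - t) 0 ^ 5 * D t) := by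
      funext t; simp only [hK]; ring
    have j0 := ii (x + h / 2)
    have jA := (ii A).const_mul (3 / 256 : ℝ)
    have j1 := (ii (x - h)).const_mul (25 / 256 : ℝ)
    have j2 := (ii x).const_mul (75 / 128 : ℝ)
    have j3 := (ii (x + h)).const_mul (75 / 128 : ℝ)
    have j4 := (ii (x + 2 * h)).const_mul (25 / 256 : ℝ)
    have jB := (ii B).const_mul (3 / 256 : ℝ)
    rw [expand]
    rw [intervalIntegral.integral_sub (((((j0.sub jA).add j1).sub j2).sub j3).add j4) jB,
      intervalIntegral.integral_add ((((j0.sub jA).add j1).sub j2).sub j3) j4,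
      intervalIntegral.integral_sub (((j0.sub jA).add j1).sub j2) j3,
      intervalIntegral.integral_sub ((j0.sub jA).add j1) j2,
      intervalIntegral.integral_add (j0.sub jA) j1,
      intervalIntegral.integral_sub j0 jA,
      intervalIntegral.integral_const_mul, intervalIntegral.integral_const_mul,
      intervalIntegral.integral_const_mul, intervalIntegral.integral_const_mul,
      intervalIntegral.integral_const_mul, intervalIntegral.integral_const_mul]
  -- the kernel is nonpositive on [A, B]
  have hKneg : ∀ t ∈ Icc A B, K t ≤ 0 := by
    intro t ht
    have htA : A ≤ t := ht.1
    have htB : t ≤ B := ht.2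
    simp only [hA, hB] at htA htB
    simp only [hK, hA, hB]
    rcases le_or_gt t (x - h) with h1 | h1
    · rw [max_eq_left (by linarith : (0:ℝ) ≤ x + h / 2 - t),
        max_eq_right (by linarith : x - 2 * h - t ≤ (0:ℝ)),
        max_eq_left (by linarith : (0:ℝ) ≤ x - h - t),
        max_eq_left (by linarith : (0:ℝ) ≤ x - t),
        max_eq_left (by linarith : (0:ℝ) ≤ x + h - t),
        max_eq_left (by linarith : (0:ℝ) ≤ x + 2 * h - t),
        max_eq_left (by linarith : (0:ℝ) ≤ x + 3 * h - t)]
      have key : (x + h / 2 - t) ^ 5 - 3 / 256 * 0 ^ 5 + 25 / 256 * (x - h - t) ^ 5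
          - 75 / 128 * (x - t) ^ 5 - 75 / 128 * (x + h - t) ^ 5
          + 25 / 256 * (x + 2 * h - t) ^ 5 - 3 / 256 * (x + 3 * h - t) ^ 5
          = 3 / 256 * (x - 2 * h - t) ^ 5 := by ring
      rw [key]
      have : (x - 2 * h - t) ^ 5 ≤ 0 :=
        Odd.pow_nonpos ⟨2, by norm_num⟩ (by linarith)
      linarith
    · rcases le_or_gt t x with h2 | h2
      · rw [max_eq_left (by linarith : (0:ℝ) ≤ x + h / 2 - t),
          max_eq_right (by linarith : x - 2 * h - t ≤ (0:ℝ)),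
          max_eq_right (by linarith : x - h - t ≤ (0:ℝ)),
          max_eq_left (by linarith : (0:ℝ) ≤ x - t),
          max_eq_left (by linarith : (0:ℝ) ≤ x + h - t),
          max_eq_left (by linarith : (0:ℝ) ≤ x + 2 * h - t),
          max_eq_left (by linarith : (0:ℝ) ≤ x + 3 * h - t)]
        have key : (x + h / 2 - t) ^ 5 - 3 / 256 * 0 ^ 5 + 25 / 256 * 0 ^ 5
            - 75 / 128 * (x - t) ^ 5 - 75 / 128 * (x + h - t) ^ 5
            + 25 / 256 * (x + 2 * h - t) ^ 5 - 3 / 256 * (x + 3 * h - t) ^ 5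
            = 3 / 256 * (x - 2 * h - t) ^ 5 - 25 / 256 * (x - h - t) ^ 5 := by ring
        rw [key]
        have hp : (2 * (t - (x - h))) ^ 5 ≤ (t - (x - 2 * h)) ^ 5 :=
          pow_le_pow_left₀ (by linarith) (by linarith) 5
        have he : (2 * (t - (x - h))) ^ 5 = 32 * (t - (x - h)) ^ 5 := by ring
        have hq : (0:ℝ) ≤ (t - (x - h)) ^ 5 := pow_nonneg (by linarith) 5
        have e1 : (x - 2 * h - t) ^ 5 = -(t - (x - 2 * h)) ^ 5 := by ring
        have e2 : (x - h - t) ^ 5 = -(t - (x - h)) ^ 5 := by ring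
        rw [e1, e2]
        linarith
      · rcases le_or_gt t (x + h / 2) with h3 | h3
        · rw [max_eq_left (by linarith : (0:ℝ) ≤ x + h / 2 - t),
            max_eq_right (by linarith : x - 2 * h - t ≤ (0:ℝ)),
            max_eq_right (by linarith : x - h - t ≤ (0:ℝ)),
            max_eq_right (by linarith : x - t ≤ (0:ℝ)),
            max_eq_left (by linarith : (0:ℝ) ≤ x + h - t),
            max_eq_left (by linarith : (0:ℝ) ≤ x + 2 * h - t),
            max_eq_left (by linarith : (0:ℝ) ≤ x + 3 * h - t)]
          have key : (x + h / 2 - t) ^ 5 - 3 / 256 * 0 ^ 5 + 25 / 256 * 0 ^ 5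
              - 75 / 128 * 0 ^ 5 - 75 / 128 * (x + h - t) ^ 5
              + 25 / 256 * (x + 2 * h - t) ^ 5 - 3 / 256 * (x + 3 * h - t) ^ 5
              = 3 / 256 * (x - 2 * h - t) ^ 5 - 25 / 256 * (x - h - t) ^ 5
                + 75 / 128 * (x - t) ^ 5 := by ring
          rw [key]
          have hp : (8 / 5 * (t - (x - h))) ^ 5 ≤ (t - (x - 2 * h)) ^ 5 :=
            pow_le_pow_left₀ (by linarith) (by linarith) 5
          have he : (8 / 5 * (t - (x - h))) ^ 5 = 32768 / 3125 * (t - (x - h)) ^ 5 := by ring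
          have hq : (0:ℝ) ≤ (t - (x - h)) ^ 5 := pow_nonneg (by linarith) 5
          have hz : (0:ℝ) ≤ (t - x) ^ 5 := pow_nonneg (by linarith) 5
          have e1 : (x - 2 * h - t) ^ 5 = -(t - (x - 2 * h)) ^ 5 := by ring
          have e2 : (x - h - t) ^ 5 = -(t - (x - h)) ^ 5 := by ring
          have e3 : (x - t) ^ 5 = -(t - x) ^ 5 := by ring
          rw [e1, e2, e3]
          linarith
        · rcases le_or_gt t (x + h) with h4 | h4
          · rw [max_eq_right (by linarith : x + h / 2 - t ≤ (0:ℝ)),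
              max_eq_right (by linarith : x - 2 * h - t ≤ (0:ℝ)),
              max_eq_right (by linarith : x - h - t ≤ (0:ℝ)),
              max_eq_right (by linarith : x - t ≤ (0:ℝ)),
              max_eq_left (by linarith : (0:ℝ) ≤ x + h - t),
              max_eq_left (by linarith : (0:ℝ) ≤ x + 2 * h - t),
              max_eq_left (by linarith : (0:ℝ) ≤ x + 3 * h - t)]
            have hp : (8 / 5 * (x + 2 * h - t)) ^ 5 ≤ (x + 3 * h - t) ^ 5 :=
              pow_le_pow_left₀ (by linarith) (by linarith) 5
            have he : (8 / 5 * (x + 2 * h - t)) ^ 5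
                = 32768 / 3125 * (x + 2 * h - t) ^ 5 := by ring
            have hq : (0:ℝ) ≤ (x + 2 * h - t) ^ 5 := pow_nonneg (by linarith) 5
            have hz : (0:ℝ) ≤ (x + h - t) ^ 5 := pow_nonneg (by linarith) 5
            norm_num
            linarith [hp, he, hq, hz]
          · rcases le_or_gt t (x + 2 * h) with h5 | h5
            · rw [max_eq_right (by linarith : x + h / 2 - t ≤ (0:ℝ)),
                max_eq_right (by linarith : x - 2 * h - t ≤ (0:ℝ)),
                max_eq_right (by linarith : x - h - t ≤ (0:ℝ)),
                max_eq_right (by linarith : x - t ≤ (0:ℝ)),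
                max_eq_right (by linarith : x + h - t ≤ (0:ℝ)),
                max_eq_left (by linarith : (0:ℝ) ≤ x + 2 * h - t),
                max_eq_left (by linarith : (0:ℝ) ≤ x + 3 * h - t)]
              have hp : (2 * (x + 2 * h - t)) ^ 5 ≤ (x + 3 * h - t) ^ 5 :=
                pow_le_pow_left₀ (by linarith) (by linarith) 5
              have he : (2 * (x + 2 * h - t)) ^ 5 = 32 * (x + 2 * h - t) ^ 5 := by ring
              have hq : (0:ℝ) ≤ (x + 2 * h - t) ^ 5 := pow_nonneg (by linarith) 5
              norm_num
              linarith [hp, he, hq]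
            · rw [max_eq_right (by linarith : x + h / 2 - t ≤ (0:ℝ)),
                max_eq_right (by linarith : x - 2 * h - t ≤ (0:ℝ)),
                max_eq_right (by linarith : x - h - t ≤ (0:ℝ)),
                max_eq_right (by linarith : x - t ≤ (0:ℝ)),
                max_eq_right (by linarith : x + h - t ≤ (0:ℝ)),
                max_eq_right (by linarith : x + 2 * h - t ≤ (0:ℝ)),
                max_eq_left (by linarith : (0:ℝ) ≤ x + 3 * h - t)]
              have hq : (0:ℝ) ≤ (x + 3 * h - t) ^ 5 := pow_nonneg (by linarith) 5
              norm_num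
              linarith [hq]
  -- normalization: the integral of the kernel
  have hSval : ∀ s ∈ I, (∫ t in A..B, max (s - t) 0 ^ 5) = (s - A) ^ 6 / 6 := by
    intro s hs
    have hi1 : IntervalIntegrable (fun t => max (s - t) 0 ^ 5) volume A s :=
      (cmax s).intervalIntegrable _ _
    have hi2 : IntervalIntegrable (fun t => max (s - t) 0 ^ 5) volume s B :=
      (cmax s).intervalIntegrable _ _
    rw [← intervalIntegral.integral_add_adjacent_intervals hi1 hi2]
    have hz : (∫ t in s..B, max (s - t) 0 ^ 5) = 0 := by
      have heq : EqOn (fun t => max (s - t) 0 ^ 5) (fun _ => (0:ℝ)) (uIcc s B) := by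
        intro t ht
        rw [uIcc_of_le hs.2] at ht
        have : max (s - t) 0 = 0 := max_eq_right (by linarith [ht.1])
        simp [this]
      rw [intervalIntegral.integral_congr heq, intervalIntegral.integral_zero]
    have h1 : (∫ t in A..s, max (s - t) 0 ^ 5) = ∫ t in A..s, (s - t) ^ 5 := by
      apply intervalIntegral.integral_congr
      intro t ht
      rw [uIcc_of_le hs.1] at ht
      show max (s - t) 0 ^ 5 = (s - t) ^ 5
      rw [max_eq_left (by linarith [ht.2] : (0:ℝ) ≤ s - t)]
    rw [hz, add_zero, h1, integ5]
    simp
  have hKint : (∫ t in A..B, K t) = -(75 / 128) * h ^ 6 := by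
    have expand : K = fun t =>
        (max (x + h / 2 - t) 0 ^ 5) - 3 / 256 * (max (A - t) 0 ^ 5)
          + 25 / 256 * (max (x - h - t) 0 ^ 5) - 75 / 128 * (max (x - t) 0 ^ 5)
          - 75 / 128 * (max (x + h - t) 0 ^ 5)
          + 25 / 256 * (max (x + 2 * h - t) 0 ^ 5)
          - 3 / 256 * (max (B - t) 0 ^ 5) := by
      funext t; simp only [hK]
    have jj : ∀ s : ℝ, IntervalIntegrable (fun t => max (s - t) 0 ^ 5) volume A B :=
      fun s => (cmax s).intervalIntegrable _ _
    have k0 := jj (x + h / 2)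
    have kA := (jj A).const_mul (3 / 256 : ℝ)
    have k1 := (jj (x - h)).const_mul (25 / 256 : ℝ)
    have k2 := (jj x).const_mul (75 / 128 : ℝ)
    have k3 := (jj (x + h)).const_mul (75 / 128 : ℝ)
    have k4 := (jj (x + 2 * h)).const_mul (25 / 256 : ℝ)
    have kB := (jj B).const_mul (3 / 256 : ℝ)
    rw [expand]
    rw [intervalIntegral.integral_sub (((((k0.sub kA).add k1).sub k2).sub k3).add k4) kB,
      intervalIntegral.integral_add ((((k0.sub kA).add k1).sub k2).sub k3) k4,
      intervalIntegral.integral_sub (((k0.sub kA).add k1).sub k2) k3,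
      intervalIntegral.integral_sub ((k0.sub kA).add k1) k2,
      intervalIntegral.integral_add (k0.sub kA) k1,
      intervalIntegral.integral_sub k0 kA,
      intervalIntegral.integral_const_mul, intervalIntegral.integral_const_mul,
      intervalIntegral.integral_const_mul, intervalIntegral.integral_const_mul,
      intervalIntegral.integral_const_mul, intervalIntegral.integral_const_mul]
    rw [hSval _ mem_m, hSval _ mem_A, hSval _ mem_a1, hSval _ mem_a2,
      hSval _ mem_a3, hSval _ mem_a4, hSval _ mem_B]
    simp only [hA, hB]
    ring
  -- the final estimate
  have hbound : |∫ t in A..B, K t * D t| ≤ (75 / 128) * h ^ 6 * M := by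
    have step1 : |∫ t in A..B, K t * D t| ≤ ∫ t in A..B, |K t * D t| :=
      intervalIntegral.abs_integral_le_integral_abs hAB.le
    have iabs : IntervalIntegrable (fun t => |K t * D t|) volume A B := iKD.abs
    have ibound : IntervalIntegrable (fun t => -K t * M) volume A B :=
      Continuous.intervalIntegrable (by exact (hKc.neg.mul continuous_const)) _ _
    have step2 : (∫ t in A..B, |K t * D t|) ≤ ∫ t in A..B, -K t * M := by
      apply intervalIntegral.integral_mono_on hAB.le iabs ibound
      intro t ht
      rw [abs_mul, abs_of_nonpos (hKneg t ht)]
      exact mul_le_mul_of_nonneg_left (hMb t ht) (by linarith [hKneg t ht])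
    have step3 : (∫ t in A..B, -K t * M) = (75 / 128) * h ^ 6 * M := by
      rw [intervalIntegral.integral_mul_const, intervalIntegral.integral_neg, hKint]
      ring
    linarith [step1, step2, step3.le, step3.ge]
  rw [hE]
  rw [hKD] at hbound
  rw [abs_mul]
  have : |(120:ℝ)⁻¹| = (120:ℝ)⁻¹ := abs_of_nonneg (by norm_num)
  rw [this]
  calc (120:ℝ)⁻¹ * |S (x + h / 2) - 3 / 256 * S A + 25 / 256 * S (x - h)
        - 75 / 128 * S x - 75 / 128 * S (x + h) + 25 / 256 * S (x + 2 * h)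
        - 3 / 256 * S B|
      ≤ (120:ℝ)⁻¹ * ((75 / 128) * h ^ 6 * M) := by
        apply mul_le_mul_of_nonneg_left hbound (by norm_num)
    _ = (5 / 1024) * h ^ 6 * M := by ring
end

section
/- Let s̃, s : ℤ → ℝ be finitely supported filters, let λ : ℤ → ℝ, and define the detail coefficients γ(m) = λ(2m+1) + Σ_{i∈ℤ} s̃(i)·λ(2(m+i)) and coarse coefficients λ'(k) = λ(2k) + Σ_{i∈ℤ} s(i)·γ(k-i). Suppose ε ≥ 0 and |γ(m)| ≤ ε for all m ∈ ℤ. Let λ̂ be the synthesis from λ' with all details set to zero, i.e. λ̂(2k) = λ'(k) and λ̂(2m+1) = -Σ_{i∈ℤ} s̃(i)·λ̂(2(m+i)). Then for all j ∈ ℤ, |λ̂(j) - λ(j)| ≤ (1 + ‖s‖₁ + ‖s̃‖₁·‖s‖₁)·ε, where ‖s‖₁ = Σ_{i∈ℤ} |s(i)| and ‖s̃‖₁ = Σ_{i∈ℤ} |s̃(i)|. (Discrete one-level compression error control: discarding all detail coefficients below a threshold ε changes the signal by at most a constant times ε in the supremum norm.) -/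
lemma lifting_aux_bound (f g : ℤ → ℝ) (hf : (Function.support f).Finite)
    (C : ℝ) (hg : ∀ i, |g i| ≤ C) :
    |∑ᶠ i : ℤ, f i * g i| ≤ (∑ᶠ i : ℤ, |f i|) * C := by
  have h1 : (∑ᶠ i : ℤ, f i * g i) = ∑ i ∈ hf.toFinset, f i * g i := by
    apply finsum_eq_finset_sum_of_support_subset
    intro x hx
    simp only [Set.Finite.coe_toFinset]
    intro h0
    apply hx
    simp [Function.mem_support.mp, h0]
  have h2 : (∑ᶠ i : ℤ, |f i|) = ∑ i ∈ hf.toFinset, |f i| := by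
    apply finsum_eq_finset_sum_of_support_subset
    intro x hx
    simp only [Set.Finite.coe_toFinset]
    intro h0
    apply hx
    simp [h0]
  rw [h1, h2, Finset.sum_mul]
  calc |∑ i ∈ hf.toFinset, f i * g i| ≤ ∑ i ∈ hf.toFinset, |f i * g i| :=
        Finset.abs_sum_le_sum_abs _ _
    _ ≤ ∑ i ∈ hf.toFinset, |f i| * C := by
        apply Finset.sum_le_sum
        intro i _
        rw [abs_mul]
        exact mul_le_mul_of_nonneg_left (hg i) (abs_nonneg _)

lemma lifting_aux_nonneg (f : ℤ → ℝ) (hf : (Function.support f).Finite) :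
    0 ≤ ∑ᶠ i : ℤ, |f i| := by
  have h2 : (∑ᶠ i : ℤ, |f i|) = ∑ i ∈ hf.toFinset, |f i| := by
    apply finsum_eq_finset_sum_of_support_subset
    intro x hx
    simp only [Set.Finite.coe_toFinset]
    intro h0
    apply hx
    simp [h0]
  rw [h2]
  exact Finset.sum_nonneg fun i _ => abs_nonneg _

/-- Discrete one-level compression error control for the lifting scheme:
discarding all detail coefficients below a threshold `ε` changes the signal by
at most `(1 + ‖s‖₁ + ‖s̃‖₁·‖s‖₁)·ε` in the supremum norm. -/
theorem lifting_scheme_compression_error_control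
    (stilde s : ℤ → ℝ)
    (hstilde : (Function.support stilde).Finite)
    (hs : (Function.support s).Finite)
    (lam : ℤ → ℝ)
    (γ : ℤ → ℝ)
    (hγ : ∀ m : ℤ, γ m = lam (2 * m + 1) + ∑ᶠ i : ℤ, stilde i * lam (2 * (m + i)))
    (lam' : ℤ → ℝ)
    (hlam' : ∀ k : ℤ, lam' k = lam (2 * k) + ∑ᶠ i : ℤ, s i * γ (k - i))
    (ε : ℝ) (hε : 0 ≤ ε)
    (hγsmall : ∀ m : ℤ, |γ m| ≤ ε)
    (lamhat : ℤ → ℝ)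
    (hhat_even : ∀ k : ℤ, lamhat (2 * k) = lam' k)
    (hhat_odd : ∀ m : ℤ, lamhat (2 * m + 1) = -∑ᶠ i : ℤ, stilde i * lamhat (2 * (m + i))) :
    ∀ j : ℤ, |lamhat j - lam j| ≤
      (1 + (∑ᶠ i : ℤ, |s i|) + (∑ᶠ i : ℤ, |stilde i|) * (∑ᶠ i : ℤ, |s i|)) * ε := by
  set S := ∑ᶠ i : ℤ, |s i| with hS
  set T := ∑ᶠ i : ℤ, |stilde i| with hT
  have hS0 : 0 ≤ S := lifting_aux_nonneg s hs
  have hT0 : 0 ≤ T := lifting_aux_nonneg stilde hstilde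
  -- even case bound
  have heven : ∀ k : ℤ, |lamhat (2 * k) - lam (2 * k)| ≤ S * ε := by
    intro k
    have : lamhat (2 * k) - lam (2 * k) = ∑ᶠ i : ℤ, s i * γ (k - i) := by
      rw [hhat_even, hlam']; ring
    rw [this]
    exact lifting_aux_bound s (fun i => γ (k - i)) hs ε (fun i => hγsmall _)
  intro j
  rcases Int.even_or_odd j with ⟨k, hk⟩ | ⟨m, hm⟩
  · have hk' : j = 2 * k := by omega
    rw [hk']
    calc |lamhat (2 * k) - lam (2 * k)| ≤ S * ε := heven k
      _ ≤ (1 + S + T * S) * ε := by nlinarith [mul_nonneg (mul_nonneg hT0 hS0) hε]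
  · have hm' : j = 2 * m + 1 := by omega
    rw [hm']
    have hsupp1 : (Function.support fun i => stilde i * lamhat (2 * (m + i))).Finite := by
      apply hstilde.subset
      intro x hx
      simp only [Function.mem_support] at hx ⊢
      intro h0; apply hx; rw [h0]; ring
    have hsupp2 : (Function.support fun i => stilde i * lam (2 * (m + i))).Finite := by
      apply hstilde.subset
      intro x hx
      simp only [Function.mem_support] at hx ⊢
      intro h0; apply hx; rw [h0]; ring
    have key : lamhat (2 * m + 1) - lam (2 * m + 1)
        = -γ m - ∑ᶠ i : ℤ, stilde i * (lamhat (2 * (m + i)) - lam (2 * (m + i))) := by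
      have hsub : (∑ᶠ i : ℤ, stilde i * (lamhat (2 * (m + i)) - lam (2 * (m + i))))
          = (∑ᶠ i : ℤ, stilde i * lamhat (2 * (m + i)))
            - ∑ᶠ i : ℤ, stilde i * lam (2 * (m + i)) := by
        rw [← finsum_sub_distrib hsupp1 hsupp2]
        congr 1; ext i; ring
      have hlamodd : lam (2 * m + 1) = γ m - ∑ᶠ i : ℤ, stilde i * lam (2 * (m + i)) := by
        rw [hγ]; ring
      rw [hhat_odd, hlamodd, hsub]; ring
    rw [key]
    have hbound : |∑ᶠ i : ℤ, stilde i * (lamhat (2 * (m + i)) - lam (2 * (m + i)))|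
        ≤ T * (S * ε) := by
      apply lifting_aux_bound stilde _ hstilde (S * ε)
      intro i
      have := heven (m + i)
      simpa using this
    calc |-γ m - ∑ᶠ i : ℤ, stilde i * (lamhat (2 * (m + i)) - lam (2 * (m + i)))|
        = |γ m + ∑ᶠ i : ℤ, stilde i * (lamhat (2 * (m + i)) - lam (2 * (m + i)))| := by
          rw [show -γ m - (∑ᶠ i : ℤ, stilde i * (lamhat (2 * (m + i)) - lam (2 * (m + i))))
            = -(γ m + ∑ᶠ i : ℤ, stilde i * (lamhat (2 * (m + i)) - lam (2 * (m + i)))) by ring,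
            abs_neg]
      _ ≤ |γ m| + |∑ᶠ i : ℤ, stilde i * (lamhat (2 * (m + i)) - lam (2 * (m + i)))| :=
          abs_add_le _ _
      _ ≤ ε + T * (S * ε) := add_le_add (hγsmall m) hbound
      _ ≤ (1 + S + T * S) * ε := by nlinarith [mul_nonneg hS0 hε]
end

section
/- Let λ : ℤ → ℝ be finitely supported and let λ' be its coarse scaling coefficients under the 2.2 forward wavelet transform. Then Σ_{j∈ℤ} λ(j) = 2·Σ_{k∈ℤ} λ'(k). (Conservation of the zeroth discrete moment across levels by the lifted second-order interpolating wavelet.) -/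
open Function

/-- Conservation of the zeroth discrete moment across levels by the lifted
second-order (2.2) interpolating wavelet. -/
theorem wavelet_2_2_conserves_zeroth_moment
    (lam : ℤ → ℝ) (hfin : (Function.support lam).Finite)
    (γ : ℤ → ℝ)
    (hγ : ∀ m : ℤ, γ m = lam (2 * m + 1) - (1 / 2) * (lam (2 * m) + lam (2 * m + 2)))
    (lam' : ℤ → ℝ)
    (hlam' : ∀ k : ℤ, lam' k = lam (2 * k) + (1 / 4) * (γ (k - 1) + γ k)) :
    ∑ᶠ j : ℤ, lam j = 2 * ∑ᶠ k : ℤ, lam' k := by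
  have hinj2 : Function.Injective (fun k : ℤ => 2 * k) := by
    intro a b h; dsimp only at h; omega
  have hinj2' : Function.Injective (fun k : ℤ => 2 * k + 1) := by
    intro a b h; dsimp only at h; omega
  have hinj2'' : Function.Injective (fun k : ℤ => 2 * k + 2) := by
    intro a b h; dsimp only at h; omega
  have hA : (Function.support fun k : ℤ => lam (2 * k)).Finite :=
    (hfin.preimage hinj2.injOn).subset fun x hx => hx
  have hB : (Function.support fun k : ℤ => lam (2 * k + 1)).Finite :=
    (hfin.preimage hinj2'.injOn).subset fun x hx => hx
  have hA2 : (Function.support fun k : ℤ => lam (2 * k + 2)).Finite :=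
    (hfin.preimage hinj2''.injOn).subset fun x hx => hx
  have hγfin : (Function.support γ).Finite := by
    refine (hB.union (hA.union hA2)).subset ?_
    intro m hm
    by_contra h
    simp only [Set.mem_union, Function.mem_support, not_or, not_not] at h hm
    rw [hγ m, h.1, h.2.1, h.2.2] at hm
    simp at hm
  have hγ1 : (Function.support fun k : ℤ => γ (k - 1)).Finite :=
    (hγfin.preimage (Function.Injective.injOn (by intro a b h; dsimp only at h; omega :
      Function.Injective fun k : ℤ => k - 1))).subset fun x hx => hx
  -- abbreviations
  set A := ∑ᶠ k : ℤ, lam (2 * k) with hAdef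
  set B := ∑ᶠ k : ℤ, lam (2 * k + 1) with hBdef
  set G := ∑ᶠ k : ℤ, γ k with hGdef
  -- shift identities
  have hshiftA : (∑ᶠ k : ℤ, lam (2 * k + 2)) = A := by
    rw [hAdef]
    have := finsum_comp_equiv (Equiv.addRight (1 : ℤ)) (f := fun k : ℤ => lam (2 * k))
    simp only [Equiv.coe_addRight] at this
    rw [← this]
    exact finsum_congr fun k => by ring_nf
  have hshiftG : (∑ᶠ k : ℤ, γ (k - 1)) = G := by
    rw [hGdef]
    have := finsum_comp_equiv (Equiv.subRight (1 : ℤ)) (f := γ)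
    simpa using this
  -- splitting the total sum into even and odd parts
  have hsplit : (∑ᶠ j : ℤ, lam j) = A + B := by
    have hdisj : Disjoint (Set.range fun k : ℤ => 2 * k) (Set.range fun k : ℤ => 2 * k + 1) := by
      rw [Set.disjoint_left]
      rintro x ⟨a, ha⟩ ⟨b, hb⟩
      dsimp only at ha hb
      omega
    have hunion : (Set.range fun k : ℤ => 2 * k) ∪ (Set.range fun k : ℤ => 2 * k + 1) =
        Set.univ := by
      ext x
      simp only [Set.mem_union, Set.mem_range, Set.mem_univ, iff_true]
      rcases Int.even_or_odd x with ⟨k, hk⟩ | ⟨k, hk⟩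
      · exact Or.inl ⟨k, by omega⟩
      · exact Or.inr ⟨k, by omega⟩
    rw [← finsum_mem_univ lam, ← hunion,
      finsum_mem_union' hdisj (hfin.inter_of_right _) (hfin.inter_of_right _),
      finsum_mem_range hinj2, finsum_mem_range hinj2']
  -- the sum of detail coefficients
  have hGval : G = B - A := by
    rw [hGdef]
    calc ∑ᶠ m : ℤ, γ m
        = ∑ᶠ m : ℤ, (lam (2 * m + 1) - (1 / 2) * (lam (2 * m) + lam (2 * m + 2))) :=
          finsum_congr hγ
      _ = B - (1 / 2) * (A + A) := by
          rw [finsum_sub_distrib hB (by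
            refine ((hA.union hA2).subset ?_).subset fun x hx => hx
            intro x hx
            simp only [Function.mem_support, Set.mem_union] at hx ⊢
            by_contra h
            push_neg at h
            rw [h.1, h.2] at hx
            simp at hx)]
          congr 1
          rw [← mul_finsum _ _]
          rw [finsum_add_distrib hA hA2, hshiftA]
      _ = B - A := by ring
  -- the sum of coarse coefficients
  have hsum' : (∑ᶠ k : ℤ, lam' k) = A + (1 / 4) * (G + G) := by
    calc ∑ᶠ k : ℤ, lam' k
        = ∑ᶠ k : ℤ, (lam (2 * k) + (1 / 4) * (γ (k - 1) + γ k)) := finsum_congr hlam'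
      _ = A + (1 / 4) * (G + G) := by
          rw [finsum_add_distrib hA (by
            refine ((hγ1.union hγfin).subset ?_).subset fun x hx => hx
            intro x hx
            simp only [Function.mem_support, Set.mem_union] at hx ⊢
            by_contra h
            push_neg at h
            rw [h.1, h.2] at hx
            simp at hx)]
          congr 1
          rw [← mul_finsum _ _]
          rw [finsum_add_distrib hγ1 hγfin, hshiftG]
  rw [hsplit, hsum', hGval]
  ring
end

section
/- Let λ : ℤ → ℝ be finitely supported and let λ' be its coarse scaling coefficients under the 2.2 forward wavelet transform. Then Σ_{j∈ℤ} j·λ(j) = 4·Σ_{k∈ℤ} k·λ'(k). (Conservation of the first discrete moment across levels by the lifted second-order interpolating wavelet: with grid coordinates x_{L+1,j} = j·2^{-(L+1)} on the fine level and x_{L,k} = k·2^{-L} on the coarse level, this is Σ_j λ(j)·x_{L+1,j} = 2·Σ_k λ'(k)·x_{L,k}.) -/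
open Function Set

/-- Reindexing a finsum over ℤ by a translation. -/
lemma finsum_shift (F : ℤ → ℝ) (d : ℤ) :
    ∑ᶠ k : ℤ, F (k + d) = ∑ᶠ k : ℤ, F k :=
  finsum_comp (fun k : ℤ => k + d) (Equiv.addRight d).bijective

/-- Splitting a finitely supported finsum over ℤ into even and odd parts. -/
lemma finsum_int_even_odd (g : ℤ → ℝ) (hg : (support g).Finite) :
    ∑ᶠ j : ℤ, g j = ∑ᶠ k : ℤ, g (2 * k) + ∑ᶠ k : ℤ, g (2 * k + 1) := by
  have h1 : Injective (fun k : ℤ => 2 * k) := by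
    intro a b h; simp only at h; omega
  have h2 : Injective (fun k : ℤ => 2 * k + 1) := by
    intro a b h; simp only at h; omega
  have hu : range (fun k : ℤ => 2 * k) ∪ range (fun k : ℤ => 2 * k + 1) = univ := by
    ext n
    simp only [mem_union, mem_range, mem_univ, iff_true]
    rcases Int.even_or_odd n with ⟨k, hk⟩ | ⟨k, hk⟩
    · exact Or.inl ⟨k, by omega⟩
    · exact Or.inr ⟨k, by omega⟩
  have hd : Disjoint (range fun k : ℤ => 2 * k) (range fun k : ℤ => 2 * k + 1) := by
    rw [Set.disjoint_left]
    rintro n ⟨a, rfl⟩ ⟨b, hb⟩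
    simp only at hb
    omega
  calc ∑ᶠ j : ℤ, g j = ∑ᶠ j ∈ (univ : Set ℤ), g j := (finsum_mem_univ g).symm
    _ = ∑ᶠ j ∈ (range fun k : ℤ => 2 * k) ∪ (range fun k : ℤ => 2 * k + 1), g j := by rw [hu]
    _ = (∑ᶠ j ∈ (range fun k : ℤ => 2 * k), g j)
        + ∑ᶠ j ∈ (range fun k : ℤ => 2 * k + 1), g j :=
      finsum_mem_union' hd (hg.subset inter_subset_right) (hg.subset inter_subset_right)
    _ = _ := by rw [finsum_mem_range h1, finsum_mem_range h2]

/-- Conservation of the first discrete moment across levels by the lifted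
second-order (2.2) interpolating wavelet. -/
theorem wavelet_2_2_conserves_first_moment
    (lam : ℤ → ℝ) (hfin : (Function.support lam).Finite)
    (γ : ℤ → ℝ)
    (hγ : ∀ m : ℤ, γ m = lam (2 * m + 1) - (1 / 2) * (lam (2 * m) + lam (2 * m + 2)))
    (lam' : ℤ → ℝ)
    (hlam' : ∀ k : ℤ, lam' k = lam (2 * k) + (1 / 4) * (γ (k - 1) + γ k)) :
    ∑ᶠ j : ℤ, (j : ℝ) * lam j = 4 * ∑ᶠ k : ℤ, (k : ℝ) * lam' k := by
  -- finiteness helper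
  have key : ∀ (F : ℤ → ℝ) (a b : ℤ), a ≠ 0 → (∀ k, lam (a * k + b) = 0 → F k = 0) →
      (support F).Finite := by
    intro F a b ha hF
    have hinj : InjOn (fun k : ℤ => a * k + b) ((fun k : ℤ => a * k + b) ⁻¹' support lam) := by
      intro x _ y _ h
      simp only at h
      have : a * x = a * y := by omega
      exact mul_left_cancel₀ ha this
    refine (hfin.preimage hinj).subset ?_
    intro k hk
    simp only [mem_preimage, mem_support]
    exact fun h0 => hk (hF k h0)
  -- the five pieces of k * lam' k
  set p1 : ℤ → ℝ := fun k => (3 / 4 : ℝ) * k * lam (2 * k) with hp1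
  set p2 : ℤ → ℝ := fun k => (1 / 4 : ℝ) * k * lam (2 * k - 1) with hp2
  set p3 : ℤ → ℝ := fun k => (1 / 4 : ℝ) * k * lam (2 * k + 1) with hp3
  set p4 : ℤ → ℝ := fun k => -(1 / 8 : ℝ) * k * lam (2 * k - 2) with hp4
  set p5 : ℤ → ℝ := fun k => -(1 / 8 : ℝ) * k * lam (2 * k + 2) with hp5
  -- shifted versions
  set r2 : ℤ → ℝ := fun k => (1 / 4 : ℝ) * ((k : ℝ) + 1) * lam (2 * k + 1) with hr2
  set r4 : ℤ → ℝ := fun k => -(1 / 8 : ℝ) * ((k : ℝ) + 1) * lam (2 * k) with hr4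
  set r5 : ℤ → ℝ := fun k => -(1 / 8 : ℝ) * ((k : ℝ) - 1) * lam (2 * k) with hr5
  have f1 : (support p1).Finite := key _ 2 0 (by norm_num)
    (fun k h => by simp only [add_zero] at h; simp [hp1, h])
  have f2 : (support p2).Finite := key _ 2 (-1) (by norm_num)
    (fun k h => by simp only [hp2]; rw [show 2 * k - 1 = 2 * k + -1 by ring]; simp [h])
  have f3 : (support p3).Finite := key _ 2 1 (by norm_num) (fun k h => by simp [hp3, h])
  have f4 : (support p4).Finite := key _ 2 (-2) (by norm_num)
    (fun k h => by simp only [hp4]; rw [show 2 * k - 2 = 2 * k + -2 by ring]; simp [h])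
  have f5 : (support p5).Finite := key _ 2 2 (by norm_num) (fun k h => by simp [hp5, h])
  have g2 : (support r2).Finite := key _ 2 1 (by norm_num) (fun k h => by simp [hr2, h])
  have g4 : (support r4).Finite := key _ 2 0 (by norm_num)
    (fun k h => by simp only [add_zero] at h; simp [hr4, h])
  have g5 : (support r5).Finite := key _ 2 0 (by norm_num)
    (fun k h => by simp only [add_zero] at h; simp [hr5, h])
  have f45 : (support (fun k => p4 k + p5 k)).Finite :=
    ((f4.union f5).subset (support_add _ _))
  have f345 : (support (fun k => p3 k + (p4 k + p5 k))).Finite :=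
    ((f3.union f45).subset (support_add _ _))
  have f2345 : (support (fun k => p2 k + (p3 k + (p4 k + p5 k)))).Finite :=
    ((f2.union f345).subset (support_add _ _))
  -- expansion of the summand
  have hexp : (fun k : ℤ => (k : ℝ) * lam' k)
      = fun k => p1 k + (p2 k + (p3 k + (p4 k + p5 k))) := by
    funext k
    rw [hlam' k, hγ (k - 1), hγ k]
    simp only [hp1, hp2, hp3, hp4, hp5]
    have e1 : 2 * (k - 1) + 1 = 2 * k - 1 := by ring
    have e2 : 2 * (k - 1) = 2 * k - 2 := by ring
    have e3 : (2 * k - 2 + 2 : ℤ) = 2 * k := by ring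
    rw [e1, e2, e3]
    ring
  -- distribute
  have hsplit : ∑ᶠ k : ℤ, (k : ℝ) * lam' k
      = (∑ᶠ k, p1 k) + ((∑ᶠ k, p2 k) + ((∑ᶠ k, p3 k) + ((∑ᶠ k, p4 k) + (∑ᶠ k, p5 k)))) := by
    rw [hexp, finsum_add_distrib f1 f2345, finsum_add_distrib f2 f345,
      finsum_add_distrib f3 f45, finsum_add_distrib f4 f5]
  -- shift p2, p4, p5
  have s2 : ∑ᶠ k, p2 k = ∑ᶠ k, r2 k := by
    rw [← finsum_shift p2 1]
    apply finsum_congr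
    intro k
    simp only [hp2, hr2]
    push_cast
    ring_nf
  have s4 : ∑ᶠ k, p4 k = ∑ᶠ k, r4 k := by
    rw [← finsum_shift p4 1]
    apply finsum_congr
    intro k
    simp only [hp4, hr4]
    push_cast
    ring_nf
  have s5 : ∑ᶠ k, p5 k = ∑ᶠ k, r5 k := by
    rw [← finsum_shift p5 (-1)]
    apply finsum_congr
    intro k
    simp only [hp5, hr5]
    push_cast
    ring_nf
  -- combined coarse-side functions
  set qE : ℤ → ℝ := fun k => ((k : ℝ) / 2) * lam (2 * k) with hqE
  set qO : ℤ → ℝ := fun k => ((2 * (k : ℝ) + 1) / 4) * lam (2 * k + 1) with hqO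
  have hEq : ∑ᶠ k, qE k = (∑ᶠ k, p1 k) + ((∑ᶠ k, r4 k) + (∑ᶠ k, r5 k)) := by
    have : qE = fun k => p1 k + (r4 k + r5 k) := by
      funext k; simp only [hqE, hp1, hr4, hr5]; ring
    rw [this, finsum_add_distrib f1 ((g4.union g5).subset (support_add _ _)),
      finsum_add_distrib g4 g5]
  have hOq : ∑ᶠ k, qO k = (∑ᶠ k, r2 k) + (∑ᶠ k, p3 k) := by
    have : qO = fun k => r2 k + p3 k := by
      funext k; simp only [hqO, hr2, hp3]; ring
    rw [this, finsum_add_distrib g2 f3]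
  have comb : ∑ᶠ k : ℤ, (k : ℝ) * lam' k = (∑ᶠ k, qE k) + ∑ᶠ k, qO k := by
    rw [hsplit, s2, s4, s5, hEq, hOq]
    ring
  -- left-hand side: even/odd split
  have hLfin : (support (fun j : ℤ => (j : ℝ) * lam j)).Finite :=
    key _ 1 0 (by norm_num) (fun k h => by simp only [one_mul, add_zero] at h; simp [h])
  rw [finsum_int_even_odd _ hLfin, comb, mul_add]
  have h4E : (4 : ℝ) * ∑ᶠ k, qE k = ∑ᶠ k : ℤ, ((2 * k : ℤ) : ℝ) * lam (2 * k) := by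
    rw [← smul_eq_mul, smul_finsum]
    apply finsum_congr
    intro k
    simp only [hqE, smul_eq_mul]
    push_cast
    ring
  have h4O : (4 : ℝ) * ∑ᶠ k, qO k = ∑ᶠ k : ℤ, ((2 * k + 1 : ℤ) : ℝ) * lam (2 * k + 1) := by
    rw [← smul_eq_mul, smul_finsum]
    apply finsum_congr
    intro k
    simp only [hqO, smul_eq_mul]
    push_cast
    ring
  rw [h4E, h4O]
end

section
/- Let λ : ℤ → ℝ be finitely supported and let λ' be its coarse scaling coefficients under the 4.2 forward wavelet transform. Then Σ_{j∈ℤ} λ(j) = 2·Σ_{k∈ℤ} λ'(k). (Conservation of the zeroth discrete moment across levels by the lifted fourth-order interpolating wavelet.) -/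
open Function Set

/-- Shift invariance of `finsum` over `ℤ`. -/
lemma finsum_int_shift (f : ℤ → ℝ) (c : ℤ) : ∑ᶠ m : ℤ, f (m + c) = ∑ᶠ m : ℤ, f m :=
  finsum_comp_equiv (Equiv.addRight c)

/-- Finiteness of support of composition with an injective map. -/
lemma support_comp_finite {f : ℤ → ℝ} (hf : (Function.support f).Finite)
    (g : ℤ → ℤ) (hg : Function.Injective g) :
    (Function.support fun m => f (g m)).Finite :=
  (hf.preimage hg.injOn).subset fun _ hm => hm

/-- Finiteness of support of a scalar multiple. -/
lemma support_smul_finite {f : ℤ → ℝ} (hf : (Function.support f).Finite) (c : ℝ) :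
    (Function.support fun m => c * f m).Finite :=
  hf.subset fun m hm h0 => hm (show c * f m = 0 by rw [h0, mul_zero])

/-- Conservation of the zeroth discrete moment across levels by the lifted
fourth-order (4.2) interpolating wavelet. -/
theorem wavelet_4_2_conserves_zeroth_moment
    (lam : ℤ → ℝ) (hfin : (Function.support lam).Finite)
    (γ : ℤ → ℝ)
    (hγ : ∀ m : ℤ, γ m =
      lam (2 * m + 1) + (1 / 16) * lam (2 * m - 2) - (9 / 16) * lam (2 * m)
        - (9 / 16) * lam (2 * m + 2) + (1 / 16) * lam (2 * m + 4))
    (lam' : ℤ → ℝ)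
    (hlam' : ∀ k : ℤ, lam' k =
      lam (2 * k) - (1 / 32) * γ (k + 1) + (9 / 32) * γ k
        + (9 / 32) * γ (k - 1) - (1 / 32) * γ (k - 2)) :
    ∑ᶠ j : ℤ, lam j = 2 * ∑ᶠ k : ℤ, lam' k := by
  -- finiteness of supports of shifted/dilated copies of lam
  have hc : ∀ b : ℤ, (Function.support fun m : ℤ => lam (2 * m + b)).Finite := fun b =>
    support_comp_finite hfin _ (fun x y h => by omega)
  have h1 := hc 1
  have hm2 : (Function.support fun m : ℤ => lam (2 * m - 2)).Finite :=
    support_comp_finite hfin (fun m => 2 * m - 2) (fun x y h => by simp only [] at h; omega)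
  have h0 : (Function.support fun m : ℤ => lam (2 * m)).Finite :=
    support_comp_finite hfin (fun m => 2 * m) (fun x y h => by simp only [] at h; omega)
  have h2 := hc 2
  have h4 := hc 4
  -- shifted even sums all equal E
  have sh : ∀ (g : ℤ → ℤ) (c : ℤ), (∀ m : ℤ, g (m + c) = 2 * m) →
      (∑ᶠ m : ℤ, lam (g m)) = ∑ᶠ m : ℤ, lam (2 * m) := by
    intro g c hgc
    rw [← finsum_int_shift (fun m => lam (g m)) c]
    exact finsum_congr fun m => by rw [hgc]
  have em2 : (∑ᶠ m : ℤ, lam (2 * m - 2)) = ∑ᶠ m : ℤ, lam (2 * m) :=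
    sh _ 1 (fun m => by ring)
  have e2 : (∑ᶠ m : ℤ, lam (2 * m + 2)) = ∑ᶠ m : ℤ, lam (2 * m) :=
    sh _ (-1) (fun m => by ring)
  have e4 : (∑ᶠ m : ℤ, lam (2 * m + 4)) = ∑ᶠ m : ℤ, lam (2 * m) :=
    sh _ (-2) (fun m => by ring)
  set E := ∑ᶠ m : ℤ, lam (2 * m) with hE
  set A := ∑ᶠ m : ℤ, lam (2 * m + 1) with hA
  -- sum of γ
  have hγfun : γ = fun m =>
      ((((fun m : ℤ => lam (2 * m + 1)) m + (fun m => (1/16 : ℝ) * lam (2 * m - 2)) m)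
        - (fun m => (9/16 : ℝ) * lam (2 * m)) m)
        - (fun m => (9/16 : ℝ) * lam (2 * m + 2)) m)
        + (fun m => (1/16 : ℝ) * lam (2 * m + 4)) m := funext fun m => by rw [hγ m]
  have sγ : ∑ᶠ m : ℤ, γ m = A - E := by
    rw [hγfun]
    rw [finsum_add_distrib (by
        exact (((h1.union (support_smul_finite hm2 _)).union
          (support_smul_finite h0 _)).union (support_smul_finite h2 _)).subset
          (fun m hm => by
            by_contra hn
            simp only [Set.mem_union, Function.mem_support, not_not, not_or] at hn
            exact hm (by simp only [Function.mem_support] at *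
                         rw [hn.1.1.1, hn.1.1.2, hn.1.2, hn.2]; ring)))
      (support_smul_finite h4 _)]
    rw [finsum_sub_distrib (by
        exact ((h1.union (support_smul_finite hm2 _)).union
          (support_smul_finite h0 _)).subset
          (fun m hm => by
            by_contra hn
            simp only [Set.mem_union, Function.mem_support, not_not, not_or] at hn
            exact hm (by simp only [Function.mem_support] at *
                         rw [hn.1.1, hn.1.2, hn.2]; ring)))
      (support_smul_finite h2 _)]
    rw [finsum_sub_distrib (by
        exact (h1.union (support_smul_finite hm2 _)).subset
          (fun m hm => by
            by_contra hn
            simp only [Set.mem_union, Function.mem_support, not_not, not_or] at hn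
            exact hm (by simp only [Function.mem_support] at *
                         rw [hn.1, hn.2]; ring)))
      (support_smul_finite h0 _)]
    rw [finsum_add_distrib h1 (support_smul_finite hm2 _)]
    rw [← mul_finsum _ _, ← mul_finsum _ _, ← mul_finsum _ _, ← mul_finsum _ _]
    rw [em2, e2, e4, ← hE, ← hA]
    ring
  -- finiteness of support of γ
  have hγfin : (Function.support γ).Finite := by
    rw [hγfun]
    exact ((((h1.union (support_smul_finite hm2 _)).union
      (support_smul_finite h0 _)).union (support_smul_finite h2 _)).union
      (support_smul_finite h4 _)).subset
      (fun m hm => by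
        by_contra hn
        simp only [Set.mem_union, Function.mem_support, not_not, not_or] at hn
        exact hm (by simp only [Function.mem_support] at *
                     rw [hn.1.1.1.1, hn.1.1.1.2, hn.1.1.2, hn.1.2, hn.2]; ring))
  -- shifted γ sums
  have hγc : ∀ b : ℤ, (Function.support fun k : ℤ => γ (k + b)).Finite := fun b =>
    support_comp_finite hγfin _ (fun x y h => by omega)
  have hγm : ∀ b : ℤ, (Function.support fun k : ℤ => γ (k - b)).Finite := fun b =>
    support_comp_finite hγfin (fun k => k - b) (fun x y h => by simp only [] at h; omega)
  have gshift : ∀ c : ℤ, (∑ᶠ k : ℤ, γ (k + c)) = ∑ᶠ m : ℤ, γ m := fun c =>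
    finsum_int_shift γ c
  have gm1 : (∑ᶠ k : ℤ, γ (k - 1)) = ∑ᶠ m : ℤ, γ m := by
    rw [← gshift (-1)]; exact finsum_congr fun k => by rw [show k + (-1) = k - 1 by ring]
  have gm2 : (∑ᶠ k : ℤ, γ (k - 2)) = ∑ᶠ m : ℤ, γ m := by
    rw [← gshift (-2)]; exact finsum_congr fun k => by rw [show k + (-2) = k - 2 by ring]
  -- sum of lam'
  have hlamfun : lam' = fun k =>
      ((((fun k : ℤ => lam (2 * k)) k - (fun k => (1/32 : ℝ) * γ (k + 1)) k)
        + (fun k => (9/32 : ℝ) * γ k) k)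
        + (fun k => (9/32 : ℝ) * γ (k - 1)) k)
        - (fun k => (1/32 : ℝ) * γ (k - 2)) k := funext fun k => by rw [hlam' k]
  have slam' : ∑ᶠ k : ℤ, lam' k = E + (1/2 : ℝ) * (A - E) := by
    rw [hlamfun]
    rw [finsum_sub_distrib (by
        exact (((h0.union (support_smul_finite (hγc 1) _)).union
          (support_smul_finite hγfin _)).union (support_smul_finite (hγm 1) _)).subset
          (fun m hm => by
            by_contra hn
            simp only [Set.mem_union, Function.mem_support, not_not, not_or] at hn
            exact hm (by simp only [Function.mem_support] at *
                         rw [hn.1.1.1, hn.1.1.2, hn.1.2, hn.2]; ring)))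
      (support_smul_finite (hγm 2) _)]
    rw [finsum_add_distrib (by
        exact ((h0.union (support_smul_finite (hγc 1) _)).union
          (support_smul_finite hγfin _)).subset
          (fun m hm => by
            by_contra hn
            simp only [Set.mem_union, Function.mem_support, not_not, not_or] at hn
            exact hm (by simp only [Function.mem_support] at *
                         rw [hn.1.1, hn.1.2, hn.2]; ring)))
      (support_smul_finite (hγm 1) _)]
    rw [finsum_add_distrib (by
        exact (h0.union (support_smul_finite (hγc 1) _)).subset
          (fun m hm => by
            by_contra hn
            simp only [Set.mem_union, Function.mem_support, not_not, not_or] at hn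
            exact hm (by simp only [Function.mem_support] at *
                         rw [hn.1, hn.2]; ring)))
      (support_smul_finite hγfin _)]
    rw [finsum_sub_distrib h0 (support_smul_finite (hγc 1) _)]
    rw [← mul_finsum _ _, ← mul_finsum _ _,
        ← mul_finsum _ _, ← mul_finsum _ _]
    rw [gshift 1, gm1, gm2, sγ, ← hE]
    ring
  -- even/odd split of the full sum
  have hsplit : ∑ᶠ j : ℤ, lam j = E + A := by
    have hinj1 : Function.Injective (fun k : ℤ => 2 * k) := fun x y h => by simp only [] at h; omega
    have hinj2 : Function.Injective (fun k : ℤ => 2 * k + 1) := fun x y h => by simp only [] at h; omega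
    have huniv : Set.range (fun k : ℤ => 2 * k) ∪ Set.range (fun k : ℤ => 2 * k + 1) =
        (Set.univ : Set ℤ) := by
      ext n
      simp only [Set.mem_union, Set.mem_range, Set.mem_univ, iff_true]
      rcases Int.even_or_odd n with ⟨k, hk⟩ | ⟨k, hk⟩
      · exact Or.inl ⟨k, by omega⟩
      · exact Or.inr ⟨k, by omega⟩
    have hd : Disjoint (Set.range (fun k : ℤ => 2 * k)) (Set.range (fun k : ℤ => 2 * k + 1)) := by
      rw [Set.disjoint_left]
      rintro x ⟨a, rfl⟩ ⟨b, hb⟩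
      simp only [] at hb
      omega
    calc ∑ᶠ j : ℤ, lam j = ∑ᶠ j ∈ (Set.univ : Set ℤ), lam j := (finsum_mem_univ lam).symm
      _ = ∑ᶠ j ∈ (Set.range (fun k : ℤ => 2 * k) ∪ Set.range (fun k : ℤ => 2 * k + 1)), lam j := by
          rw [huniv]
      _ = (∑ᶠ j ∈ Set.range (fun k : ℤ => 2 * k), lam j)
          + ∑ᶠ j ∈ Set.range (fun k : ℤ => 2 * k + 1), lam j :=
          finsum_mem_union' hd (hfin.inter_of_right _) (hfin.inter_of_right _)
      _ = E + A := by rw [finsum_mem_range hinj1, finsum_mem_range hinj2]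
  rw [hsplit, slam']
  ring
end

section
/- Let λ : ℤ → ℝ be finitely supported and let λ' be its coarse scaling coefficients under the 4.2 forward wavelet transform. Then Σ_{j∈ℤ} j·λ(j) = 4·Σ_{k∈ℤ} k·λ'(k). (Conservation of the first discrete moment across levels by the lifted fourth-order interpolating wavelet: with grid coordinates x_{L+1,j} = j·2^{-(L+1)} on the fine level and x_{L,k} = k·2^{-L} on the coarse level, this is Σ_j λ(j)·x_{L+1,j} = 2·Σ_k λ'(k)·x_{L,k}.) -/
private lemma supp_comp_finite {f : ℤ → ℝ} (hf : (Function.support f).Finite)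
    (F : ℤ → ℝ) (e : ℤ → ℤ) (he : Function.Injective e)
    (h : ∀ k, f (e k) = 0 → F k = 0) : (Function.support F).Finite := by
  apply (hf.preimage he.injOn).subset
  intro k hk
  exact fun hz => hk (h k hz)

private lemma finsum_shift_add (f g : ℤ → ℝ) (c : ℤ) (h : ∀ x : ℤ, f x = g (x + c)) :
    ∑ᶠ k : ℤ, f k = ∑ᶠ k : ℤ, g k :=
  finsum_eq_of_bijective (fun k => k + c) (Equiv.addRight c).bijective h

private lemma finsum_shift_sub (f g : ℤ → ℝ) (c : ℤ) (h : ∀ x : ℤ, f x = g (x - c)) :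
    ∑ᶠ k : ℤ, f k = ∑ᶠ k : ℤ, g k :=
  finsum_eq_of_bijective (fun k => k - c) (Equiv.subRight c).bijective h

private lemma supp_add_fin {f g : ℤ → ℝ} (hf : (Function.support f).Finite)
    (hg : (Function.support g).Finite) :
    (Function.support fun k => f k + g k).Finite := by
  apply (hf.union hg).subset
  intro x hx
  simp only [Set.mem_union, Function.mem_support] at hx ⊢
  by_contra hc
  push_neg at hc
  exact hx (by rw [hc.1, hc.2, add_zero])

private lemma finsum_add4 {f0 f1 f2 f3 : ℤ → ℝ}
    (h0 : (Function.support f0).Finite) (h1 : (Function.support f1).Finite)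
    (h2 : (Function.support f2).Finite) (h3 : (Function.support f3).Finite) :
    ∑ᶠ k : ℤ, (f0 k + f1 k + f2 k + f3 k)
      = (∑ᶠ k : ℤ, f0 k) + (∑ᶠ k : ℤ, f1 k) + (∑ᶠ k : ℤ, f2 k) + (∑ᶠ k : ℤ, f3 k) := by
  have s01 : (Function.support fun k => f0 k + f1 k).Finite := supp_add_fin h0 h1
  have s012 : (Function.support fun k => f0 k + f1 k + f2 k).Finite := supp_add_fin s01 h2
  calc ∑ᶠ k : ℤ, (f0 k + f1 k + f2 k + f3 k)
      = (∑ᶠ k : ℤ, (f0 k + f1 k + f2 k)) + ∑ᶠ k : ℤ, f3 k := finsum_add_distrib s012 h3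
    _ = ((∑ᶠ k : ℤ, (f0 k + f1 k)) + ∑ᶠ k : ℤ, f2 k) + ∑ᶠ k : ℤ, f3 k :=
        congrArg (· + ∑ᶠ k : ℤ, f3 k) (finsum_add_distrib s01 h2)
    _ = ((∑ᶠ k : ℤ, f0 k) + (∑ᶠ k : ℤ, f1 k) + (∑ᶠ k : ℤ, f2 k)) + ∑ᶠ k : ℤ, f3 k := by
        have := finsum_add_distrib h0 h1
        exact congrArg (· + ∑ᶠ k : ℤ, f3 k) (congrArg (· + ∑ᶠ k : ℤ, f2 k) this)

private lemma finsum_add5 {f0 f1 f2 f3 f4 : ℤ → ℝ}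
    (h0 : (Function.support f0).Finite) (h1 : (Function.support f1).Finite)
    (h2 : (Function.support f2).Finite) (h3 : (Function.support f3).Finite)
    (h4 : (Function.support f4).Finite) :
    ∑ᶠ k : ℤ, (f0 k + f1 k + f2 k + f3 k + f4 k)
      = (∑ᶠ k : ℤ, f0 k) + (∑ᶠ k : ℤ, f1 k) + (∑ᶠ k : ℤ, f2 k) + (∑ᶠ k : ℤ, f3 k)
        + (∑ᶠ k : ℤ, f4 k) := by
  have s0123 : (Function.support fun k => f0 k + f1 k + f2 k + f3 k).Finite :=
    supp_add_fin (supp_add_fin (supp_add_fin h0 h1) h2) h3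
  calc ∑ᶠ k : ℤ, (f0 k + f1 k + f2 k + f3 k + f4 k)
      = (∑ᶠ k : ℤ, (f0 k + f1 k + f2 k + f3 k)) + ∑ᶠ k : ℤ, f4 k :=
        finsum_add_distrib s0123 h4
    _ = _ := congrArg (· + ∑ᶠ k : ℤ, f4 k) (finsum_add4 h0 h1 h2 h3)

/-- Conservation of the first discrete moment across levels by the lifted
fourth-order (4.2) interpolating wavelet. -/
theorem wavelet_4_2_conserves_first_moment
    (lam : ℤ → ℝ) (hfin : (Function.support lam).Finite)
    (γ : ℤ → ℝ)
    (hγ : ∀ m : ℤ, γ m =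
      lam (2 * m + 1) + (1 / 16) * lam (2 * m - 2) - (9 / 16) * lam (2 * m)
        - (9 / 16) * lam (2 * m + 2) + (1 / 16) * lam (2 * m + 4))
    (lam' : ℤ → ℝ)
    (hlam' : ∀ k : ℤ, lam' k =
      lam (2 * k) - (1 / 32) * γ (k + 1) + (9 / 32) * γ k
        + (9 / 32) * γ (k - 1) - (1 / 32) * γ (k - 2)) :
    ∑ᶠ j : ℤ, (j : ℝ) * lam j = 4 * ∑ᶠ k : ℤ, (k : ℝ) * lam' k := by
  -- injectivity of the various index maps
  have i2 : Function.Injective (fun m : ℤ => 2 * m) := by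
    intro x y h; dsimp only at h; omega
  have i2p1 : Function.Injective (fun m : ℤ => 2 * m + 1) := by
    intro x y h; dsimp only at h; omega
  have i2m2 : Function.Injective (fun m : ℤ => 2 * m - 2) := by
    intro x y h; dsimp only at h; omega
  have i2p2 : Function.Injective (fun m : ℤ => 2 * m + 2) := by
    intro x y h; dsimp only at h; omega
  have i2p4 : Function.Injective (fun m : ℤ => 2 * m + 4) := by
    intro x y h; dsimp only at h; omega
  have ip1 : Function.Injective (fun m : ℤ => m + 1) := by
    intro x y h; dsimp only at h; omega
  have im1 : Function.Injective (fun m : ℤ => m - 1) := by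
    intro x y h; dsimp only at h; omega
  have im2 : Function.Injective (fun m : ℤ => m - 2) := by
    intro x y h; dsimp only at h; omega
  have iid : Function.Injective (fun m : ℤ => m) := fun x y h => h
  -- finiteness of the support of γ
  have hγfin : (Function.support γ).Finite := by
    apply Set.Finite.subset
      (((((hfin.preimage i2p1.injOn).union (hfin.preimage i2m2.injOn)).union
        (hfin.preimage i2.injOn)).union (hfin.preimage i2p2.injOn)).union
        (hfin.preimage i2p4.injOn))
    intro m hm
    simp only [Set.mem_union, Set.mem_preimage, Function.mem_support] at hm ⊢
    by_contra h
    push_neg at h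
    obtain ⟨⟨⟨⟨g1, g2⟩, g3⟩, g4⟩, g5⟩ := h
    exact hm (by rw [hγ m, g1, g2, g3, g4, g5]; ring)
  -- finiteness of the support of lam'
  have hlam'fin : (Function.support lam').Finite := by
    apply Set.Finite.subset
      (((((hfin.preimage i2.injOn).union (hγfin.preimage ip1.injOn)).union
        (hγfin.preimage iid.injOn)).union (hγfin.preimage im1.injOn)).union
        (hγfin.preimage im2.injOn))
    intro k hk
    simp only [Set.mem_union, Set.mem_preimage, Function.mem_support] at hk ⊢
    by_contra h
    push_neg at h
    obtain ⟨⟨⟨⟨g1, g2⟩, g3⟩, g4⟩, g5⟩ := h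
    exact hk (by rw [hlam' k, g1, g2, g3, g4, g5]; ring)
  -- support finiteness of all the pieces
  have hfin' : (Function.support fun k : ℤ => 4 * ((k : ℝ) * lam' k)).Finite :=
    supp_comp_finite hlam'fin _ (fun m => m) iid
      (fun k hk => by (try dsimp only at hk ⊢); rw [hk]; ring)
  have hP0 : (Function.support fun k : ℤ => 4 * (k : ℝ) * lam (2 * k)).Finite :=
    supp_comp_finite hfin _ _ i2 (fun k hk => by (try dsimp only at hk ⊢); rw [hk]; ring)
  have hP1 : (Function.support fun k : ℤ => -(1 / 8 : ℝ) * (k : ℝ) * γ (k + 1)).Finite :=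
    supp_comp_finite hγfin _ _ ip1 (fun k hk => by (try dsimp only at hk ⊢); rw [hk]; ring)
  have hP2 : (Function.support fun k : ℤ => (9 / 8 : ℝ) * (k : ℝ) * γ k).Finite :=
    supp_comp_finite hγfin _ (fun m => m) iid
      (fun k hk => by (try dsimp only at hk ⊢); rw [hk]; ring)
  have hP3 : (Function.support fun k : ℤ => (9 / 8 : ℝ) * (k : ℝ) * γ (k - 1)).Finite :=
    supp_comp_finite hγfin _ _ im1 (fun k hk => by (try dsimp only at hk ⊢); rw [hk]; ring)
  have hP4 : (Function.support fun k : ℤ => -(1 / 8 : ℝ) * (k : ℝ) * γ (k - 2)).Finite :=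
    supp_comp_finite hγfin _ _ im2 (fun k hk => by (try dsimp only at hk ⊢); rw [hk]; ring)
  have hQ1 : (Function.support fun m : ℤ => -(1 / 8 : ℝ) * ((m : ℝ) - 1) * γ m).Finite :=
    supp_comp_finite hγfin _ (fun m => m) iid
      (fun k hk => by (try dsimp only at hk ⊢); rw [hk]; ring)
  have hQ3 : (Function.support fun m : ℤ => (9 / 8 : ℝ) * ((m : ℝ) + 1) * γ m).Finite :=
    supp_comp_finite hγfin _ (fun m => m) iid
      (fun k hk => by (try dsimp only at hk ⊢); rw [hk]; ring)
  have hQ4 : (Function.support fun m : ℤ => -(1 / 8 : ℝ) * ((m : ℝ) + 2) * γ m).Finite :=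
    supp_comp_finite hγfin _ (fun m => m) iid
      (fun k hk => by (try dsimp only at hk ⊢); rw [hk]; ring)
  have hR0 : (Function.support fun m : ℤ => (2 * (m : ℝ) + 1) * lam (2 * m + 1)).Finite :=
    supp_comp_finite hfin _ _ i2p1 (fun k hk => by (try dsimp only at hk ⊢); rw [hk]; ring)
  have hR1 : (Function.support fun m : ℤ =>
      (1 / 16 : ℝ) * (2 * (m : ℝ) + 1) * lam (2 * m - 2)).Finite :=
    supp_comp_finite hfin _ _ i2m2 (fun k hk => by (try dsimp only at hk ⊢); rw [hk]; ring)
  have hR2 : (Function.support fun m : ℤ =>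
      -(9 / 16 : ℝ) * (2 * (m : ℝ) + 1) * lam (2 * m)).Finite :=
    supp_comp_finite hfin _ _ i2 (fun k hk => by (try dsimp only at hk ⊢); rw [hk]; ring)
  have hR3 : (Function.support fun m : ℤ =>
      -(9 / 16 : ℝ) * (2 * (m : ℝ) + 1) * lam (2 * m + 2)).Finite :=
    supp_comp_finite hfin _ _ i2p2 (fun k hk => by (try dsimp only at hk ⊢); rw [hk]; ring)
  have hR4 : (Function.support fun m : ℤ =>
      (1 / 16 : ℝ) * (2 * (m : ℝ) + 1) * lam (2 * m + 4)).Finite :=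
    supp_comp_finite hfin _ _ i2p4 (fun k hk => by (try dsimp only at hk ⊢); rw [hk]; ring)
  have hS1 : (Function.support fun m : ℤ =>
      (1 / 16 : ℝ) * (2 * (m : ℝ) + 3) * lam (2 * m)).Finite :=
    supp_comp_finite hfin _ _ i2 (fun k hk => by (try dsimp only at hk ⊢); rw [hk]; ring)
  have hS3 : (Function.support fun m : ℤ =>
      -(9 / 16 : ℝ) * (2 * (m : ℝ) - 1) * lam (2 * m)).Finite :=
    supp_comp_finite hfin _ _ i2 (fun k hk => by (try dsimp only at hk ⊢); rw [hk]; ring)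
  have hS4 : (Function.support fun m : ℤ =>
      (1 / 16 : ℝ) * (2 * (m : ℝ) - 3) * lam (2 * m)).Finite :=
    supp_comp_finite hfin _ _ i2 (fun k hk => by (try dsimp only at hk ⊢); rw [hk]; ring)
  -- the shifts
  have sh1 : ∑ᶠ k : ℤ, -(1 / 8 : ℝ) * (k : ℝ) * γ (k + 1)
      = ∑ᶠ m : ℤ, -(1 / 8 : ℝ) * ((m : ℝ) - 1) * γ m := by
    apply finsum_shift_add _ _ 1
    intro x; push_cast; ring
  have sh3 : ∑ᶠ k : ℤ, (9 / 8 : ℝ) * (k : ℝ) * γ (k - 1)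
      = ∑ᶠ m : ℤ, (9 / 8 : ℝ) * ((m : ℝ) + 1) * γ m := by
    apply finsum_shift_sub _ _ 1
    intro x; push_cast; ring
  have sh4 : ∑ᶠ k : ℤ, -(1 / 8 : ℝ) * (k : ℝ) * γ (k - 2)
      = ∑ᶠ m : ℤ, -(1 / 8 : ℝ) * ((m : ℝ) + 2) * γ m := by
    apply finsum_shift_sub _ _ 2
    intro x; push_cast; ring
  have shR1 : ∑ᶠ m : ℤ, (1 / 16 : ℝ) * (2 * (m : ℝ) + 1) * lam (2 * m - 2)
      = ∑ᶠ m : ℤ, (1 / 16 : ℝ) * (2 * (m : ℝ) + 3) * lam (2 * m) := by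
    apply finsum_shift_sub _ _ 1
    intro x
    rw [show 2 * (x - 1) = 2 * x - 2 by ring]
    push_cast; ring
  have shR3 : ∑ᶠ m : ℤ, -(9 / 16 : ℝ) * (2 * (m : ℝ) + 1) * lam (2 * m + 2)
      = ∑ᶠ m : ℤ, -(9 / 16 : ℝ) * (2 * (m : ℝ) - 1) * lam (2 * m) := by
    apply finsum_shift_add _ _ 1
    intro x
    rw [show 2 * (x + 1) = 2 * x + 2 by ring]
    push_cast; ring
  have shR4 : ∑ᶠ m : ℤ, (1 / 16 : ℝ) * (2 * (m : ℝ) + 1) * lam (2 * m + 4)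
      = ∑ᶠ m : ℤ, (1 / 16 : ℝ) * (2 * (m : ℝ) - 3) * lam (2 * m) := by
    apply finsum_shift_add _ _ 2
    intro x
    rw [show 2 * (x + 2) = 2 * x + 4 by ring]
    push_cast; ring
  -- splitting the fine-level sum into even and odd parts
  have hFfin : (Function.support fun j : ℤ => (j : ℝ) * lam j).Finite :=
    supp_comp_finite hfin _ (fun m => m) iid
      (fun k hk => by (try dsimp only at hk ⊢); rw [hk]; ring)
  have hunion : Set.range (fun k : ℤ => 2 * k) ∪ Set.range (fun k : ℤ => 2 * k + 1)
      = Set.univ := by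
    ext j
    simp only [Set.mem_union, Set.mem_range, Set.mem_univ, iff_true]
    rcases Int.even_or_odd j with ⟨k, hk⟩ | ⟨k, hk⟩
    · exact Or.inl ⟨k, by omega⟩
    · exact Or.inr ⟨k, by omega⟩
  have hdisj : Disjoint (Set.range fun k : ℤ => 2 * k) (Set.range fun k : ℤ => 2 * k + 1) := by
    rw [Set.disjoint_left]
    rintro a ⟨x, hx⟩ ⟨y, hy⟩
    dsimp only at hx hy
    omega
  have hsplit : ∑ᶠ j : ℤ, (j : ℝ) * lam j
      = (∑ᶠ m : ℤ, 2 * (m : ℝ) * lam (2 * m))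
        + ∑ᶠ m : ℤ, (2 * (m : ℝ) + 1) * lam (2 * m + 1) := by
    calc ∑ᶠ j : ℤ, (j : ℝ) * lam j
        = ∑ᶠ j ∈ (Set.univ : Set ℤ), (j : ℝ) * lam j := (finsum_mem_univ _).symm
      _ = ∑ᶠ j ∈ Set.range (fun k : ℤ => 2 * k) ∪ Set.range (fun k : ℤ => 2 * k + 1),
            (j : ℝ) * lam j := by rw [hunion]
      _ = (∑ᶠ j ∈ Set.range (fun k : ℤ => 2 * k), (j : ℝ) * lam j)
            + ∑ᶠ j ∈ Set.range (fun k : ℤ => 2 * k + 1), (j : ℝ) * lam j :=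
          finsum_mem_union' hdisj (hFfin.inter_of_right _) (hFfin.inter_of_right _)
      _ = (∑ᶠ k : ℤ, ((2 * k : ℤ) : ℝ) * lam (2 * k))
            + ∑ᶠ k : ℤ, ((2 * k + 1 : ℤ) : ℝ) * lam (2 * k + 1) := by
          rw [finsum_mem_range i2, finsum_mem_range i2p1]
      _ = _ := by
          congr 1
          · exact finsum_congr fun k => by push_cast; ring
          · exact finsum_congr fun k => by push_cast; ring
  -- the main computation
  have main : 4 * ∑ᶠ k : ℤ, (k : ℝ) * lam' k = ∑ᶠ j : ℤ, (j : ℝ) * lam j := by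
    calc 4 * ∑ᶠ k : ℤ, (k : ℝ) * lam' k
        = ∑ᶠ k : ℤ, 4 * ((k : ℝ) * lam' k) := by
          apply mul_finsum
      _ = ∑ᶠ k : ℤ, (4 * (k : ℝ) * lam (2 * k) + -(1 / 8 : ℝ) * (k : ℝ) * γ (k + 1)
            + (9 / 8 : ℝ) * (k : ℝ) * γ k + (9 / 8 : ℝ) * (k : ℝ) * γ (k - 1)
            + -(1 / 8 : ℝ) * (k : ℝ) * γ (k - 2)) :=
          finsum_congr fun k => by rw [hlam' k]; ring
      _ = (∑ᶠ k : ℤ, 4 * (k : ℝ) * lam (2 * k))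
            + (∑ᶠ k : ℤ, -(1 / 8 : ℝ) * (k : ℝ) * γ (k + 1))
            + (∑ᶠ k : ℤ, (9 / 8 : ℝ) * (k : ℝ) * γ k)
            + (∑ᶠ k : ℤ, (9 / 8 : ℝ) * (k : ℝ) * γ (k - 1))
            + (∑ᶠ k : ℤ, -(1 / 8 : ℝ) * (k : ℝ) * γ (k - 2)) :=
          finsum_add5 hP0 hP1 hP2 hP3 hP4
      _ = (∑ᶠ k : ℤ, 4 * (k : ℝ) * lam (2 * k))
            + (∑ᶠ m : ℤ, -(1 / 8 : ℝ) * ((m : ℝ) - 1) * γ m)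
            + (∑ᶠ m : ℤ, (9 / 8 : ℝ) * (m : ℝ) * γ m)
            + (∑ᶠ m : ℤ, (9 / 8 : ℝ) * ((m : ℝ) + 1) * γ m)
            + (∑ᶠ m : ℤ, -(1 / 8 : ℝ) * ((m : ℝ) + 2) * γ m) := by
          rw [sh1, sh3, sh4]
      _ = (∑ᶠ k : ℤ, 4 * (k : ℝ) * lam (2 * k))
            + ∑ᶠ m : ℤ, (-(1 / 8 : ℝ) * ((m : ℝ) - 1) * γ m + (9 / 8 : ℝ) * (m : ℝ) * γ m
              + (9 / 8 : ℝ) * ((m : ℝ) + 1) * γ m + -(1 / 8 : ℝ) * ((m : ℝ) + 2) * γ m) := by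
          rw [finsum_add4 hQ1 hP2 hQ3 hQ4]
          ring
      _ = (∑ᶠ k : ℤ, 4 * (k : ℝ) * lam (2 * k))
            + ∑ᶠ m : ℤ, ((2 * (m : ℝ) + 1) * lam (2 * m + 1)
              + (1 / 16 : ℝ) * (2 * (m : ℝ) + 1) * lam (2 * m - 2)
              + -(9 / 16 : ℝ) * (2 * (m : ℝ) + 1) * lam (2 * m)
              + -(9 / 16 : ℝ) * (2 * (m : ℝ) + 1) * lam (2 * m + 2)
              + (1 / 16 : ℝ) * (2 * (m : ℝ) + 1) * lam (2 * m + 4)) := by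
          congr 1
          exact finsum_congr fun m => by rw [hγ m]; ring
      _ = (∑ᶠ k : ℤ, 4 * (k : ℝ) * lam (2 * k))
            + ((∑ᶠ m : ℤ, (2 * (m : ℝ) + 1) * lam (2 * m + 1))
              + (∑ᶠ m : ℤ, (1 / 16 : ℝ) * (2 * (m : ℝ) + 1) * lam (2 * m - 2))
              + (∑ᶠ m : ℤ, -(9 / 16 : ℝ) * (2 * (m : ℝ) + 1) * lam (2 * m))
              + (∑ᶠ m : ℤ, -(9 / 16 : ℝ) * (2 * (m : ℝ) + 1) * lam (2 * m + 2))
              + (∑ᶠ m : ℤ, (1 / 16 : ℝ) * (2 * (m : ℝ) + 1) * lam (2 * m + 4))) := by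
          congr 1
          exact finsum_add5 hR0 hR1 hR2 hR3 hR4
      _ = (∑ᶠ m : ℤ, (2 * (m : ℝ) + 1) * lam (2 * m + 1))
            + ∑ᶠ m : ℤ, (4 * (m : ℝ) * lam (2 * m)
              + (1 / 16 : ℝ) * (2 * (m : ℝ) + 3) * lam (2 * m)
              + -(9 / 16 : ℝ) * (2 * (m : ℝ) + 1) * lam (2 * m)
              + -(9 / 16 : ℝ) * (2 * (m : ℝ) - 1) * lam (2 * m)
              + (1 / 16 : ℝ) * (2 * (m : ℝ) - 3) * lam (2 * m)) := by
          rw [shR1, shR3, shR4, finsum_add5 hP0 hS1 hR2 hS3 hS4]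
          ring
      _ = (∑ᶠ m : ℤ, (2 * (m : ℝ) + 1) * lam (2 * m + 1))
            + ∑ᶠ m : ℤ, 2 * (m : ℝ) * lam (2 * m) := by
          congr 1
          exact finsum_congr fun m => by ring
      _ = ∑ᶠ j : ℤ, (j : ℝ) * lam j := by rw [hsplit]; ring
  exact main.symm
end

section
/- Let λ : ℤ → ℝ be finitely supported and let λ' be its coarse scaling coefficients under the 6.2 forward wavelet transform. Then Σ_{j∈ℤ} λ(j) = 2·Σ_{k∈ℤ} λ'(k). (Conservation of the zeroth discrete moment across levels by the lifted sixth-order interpolating wavelet.) -/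
open Function Set

private lemma shift_finsum (f : ℤ → ℝ) (t : ℤ) : ∑ᶠ m, f (m + t) = ∑ᶠ m, f m :=
  finsum_comp_equiv (Equiv.addRight t)

private lemma aff_fin (f : ℤ → ℝ) (hf : (support f).Finite) (a b : ℤ) (ha : a ≠ 0) :
    (support fun m => f (a * m + b)).Finite := by
  have : (support fun m => f (a * m + b)) = (fun m => a * m + b) ⁻¹' support f := by
    ext m; simp [support]
  rw [this]
  exact hf.preimage (fun x _ y _ hxy => mul_left_cancel₀ ha (add_right_cancel hxy))

private lemma mulc_fin (c : ℝ) (f : ℤ → ℝ) (hf : (support f).Finite) :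
    (support fun m => c * f m).Finite :=
  hf.subset (fun m hm => by simp only [mem_support] at *; intro h; simp [h] at hm)

/-- Conservation of the zeroth discrete moment across levels by the lifted
sixth-order (6.2) interpolating wavelet. -/
theorem wavelet_6_2_conserves_zeroth_moment
    (lam : ℤ → ℝ) (hfin : (Function.support lam).Finite)
    (γ : ℤ → ℝ)
    (hγ : ∀ m : ℤ, γ m =
      lam (2 * m + 1) - (3 / 256) * lam (2 * m - 4) + (25 / 256) * lam (2 * m - 2)
        - (75 / 128) * lam (2 * m) - (75 / 128) * lam (2 * m + 2)
        + (25 / 256) * lam (2 * m + 4) - (3 / 256) * lam (2 * m + 6))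
    (lam' : ℤ → ℝ)
    (hlam' : ∀ k : ℤ, lam' k =
      lam (2 * k) + (3 / 512) * γ (k + 2) - (25 / 512) * γ (k + 1)
        + (75 / 256) * γ k + (75 / 256) * γ (k - 1)
        - (25 / 512) * γ (k - 2) + (3 / 512) * γ (k - 3)) :
    ∑ᶠ j : ℤ, lam j = 2 * ∑ᶠ k : ℤ, lam' k := by
  -- even and odd parts
  set g : ℤ → ℝ := fun k => lam (2 * k) with hg
  set h : ℤ → ℝ := fun k => lam (2 * k + 1) with hh
  have hgfin : (support g).Finite := aff_fin lam hfin 2 0 (by norm_num) |>.subset (by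
    intro m; simp [hg, mem_support])
  have hhfin : (support h).Finite := aff_fin lam hfin 2 1 (by norm_num)
  set G := ∑ᶠ k, g k with hG
  set H := ∑ᶠ k, h k with hH
  -- shifted even sums
  have heshift : ∀ t : ℤ, ∑ᶠ m, lam (2 * m + t) = (if 2 ∣ t then G else H) := by
    intro t
    rcases Int.even_or_odd t with ⟨s, hs⟩ | ⟨s, hs⟩
    · have h2 : (2 : ℤ) ∣ t := ⟨s, by omega⟩
      rw [if_pos h2]
      have : ∀ m : ℤ, lam (2 * m + t) = g (m + s) := by
        intro m; simp only [hg]; congr 1; omega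
      rw [finsum_congr this, shift_finsum]
    · have h2 : ¬ (2 : ℤ) ∣ t := by omega
      rw [if_neg h2]
      have : ∀ m : ℤ, lam (2 * m + t) = h (m + s) := by
        intro m; simp only [hh]; congr 1; omega
      rw [finsum_congr this, shift_finsum]
  -- support of γ is finite
  have hγfin : (support γ).Finite := by
    have : support γ ⊆ ⋃ t ∈ ({1, -4, -2, 0, 2, 4, 6} : Finset ℤ),
        support (fun m => lam (2 * m + t)) := by
      intro m hm
      simp only [mem_support] at hm
      by_contra hc
      simp only [mem_iUnion, mem_support, not_exists, not_and, ne_eq, not_not] at hc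
      apply hm
      rw [hγ m]
      have e1 := hc 1 (by simp)
      have e2 := hc (-4) (by simp)
      have e3 := hc (-2) (by simp)
      have e4 := hc 0 (by simp)
      have e5 := hc 2 (by simp)
      have e6 := hc 4 (by simp)
      have e7 := hc 6 (by simp)
      simp only [show ∀ m : ℤ, 2*m + (-4) = 2*m - 4 from fun m => by ring,
        show ∀ m : ℤ, 2*m + (-2) = 2*m - 2 from fun m => by ring,
        show ∀ m : ℤ, 2*m + 0 = 2*m from fun m => by ring] at e1 e2 e3 e4 e5 e6 e7
      rw [e1, e2, e3, e4, e5, e6, e7]; ring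
    exact (Set.Finite.biUnion (Finset.finite_toSet _)
      (fun t _ => aff_fin lam hfin 2 t (by norm_num))).subset this
  -- sum of γ
  have hSγ : ∑ᶠ m, γ m = H - G := by
    have hfin' : ∀ t : ℤ, (support fun m => lam (2 * m + t)).Finite :=
      fun t => aff_fin lam hfin 2 t (by norm_num)
    have key : ∀ m : ℤ, γ m =
        lam (2*m+1) - (3/256) * lam (2*m+(-4)) + (25/256) * lam (2*m+(-2))
        - (75/128) * lam (2*m+0) - (75/128) * lam (2*m+2)
        + (25/256) * lam (2*m+4) - (3/256) * lam (2*m+6) := by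
      intro m; rw [hγ m]
      norm_num [show (2:ℤ)*m + (-4) = 2*m-4 by ring, show (2:ℤ)*m + (-2) = 2*m-2 by ring]
    rw [finsum_congr key]
    have F : ∀ (c : ℝ) (t : ℤ), (support fun m => c * lam (2*m+t)).Finite :=
      fun c t => mulc_fin c _ (hfin' t)
    have A : ∀ (c : ℝ) (t : ℤ), ∑ᶠ m, c * lam (2*m+t) = c * (if 2 ∣ t then G else H) := by
      intro c t
      have hs := smul_finsum' c (f := fun m : ℤ => lam (2*m+t)) (hfin' t)
      simp only [smul_eq_mul] at hs
      rw [← hs, heshift t]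
    rw [finsum_sub_distrib ?_ (F _ 6), finsum_add_distrib ?_ (F _ 4),
        finsum_sub_distrib ?_ (F _ 2), finsum_sub_distrib ?_ (F _ 0),
        finsum_add_distrib ?_ (F _ (-2)), finsum_sub_distrib (hfin' 1) (F _ (-4))]
    · rw [heshift 1, A, A, A, A, A, A]
      norm_num; ring
    · exact ((hfin' 1).union (F _ (-4))).subset (support_sub _ _)
    · exact (((hfin' 1).union (F _ (-4))).subset (support_sub _ _) |>.union (F _ (-2))).subset
        (support_add _ _)
    · exact ((((hfin' 1).union (F _ (-4))).subset (support_sub _ _) |>.union (F _ (-2))).subset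
        (support_add _ _) |>.union (F _ 0)).subset (support_sub _ _)
    · exact (((((hfin' 1).union (F _ (-4))).subset (support_sub _ _) |>.union (F _ (-2))).subset
        (support_add _ _) |>.union (F _ 0)).subset (support_sub _ _) |>.union (F _ 2)).subset
        (support_sub _ _)
    · exact ((((((hfin' 1).union (F _ (-4))).subset (support_sub _ _) |>.union (F _ (-2))).subset
        (support_add _ _) |>.union (F _ 0)).subset (support_sub _ _) |>.union (F _ 2)).subset
        (support_sub _ _) |>.union (F _ 4)).subset (support_add _ _)
  -- shifted γ sums
  have hγshift : ∀ t : ℤ, ∑ᶠ k, γ (k + t) = H - G := by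
    intro t; rw [shift_finsum γ t, hSγ]
  have hγfin' : ∀ t : ℤ, (support fun k => γ (k + t)).Finite := by
    intro t
    have := aff_fin γ hγfin 1 t (by norm_num)
    simpa using this
  -- sum of lam'
  have hSlam' : ∑ᶠ k, lam' k = G + (1/2) * (H - G) := by
    have key : ∀ k : ℤ, lam' k =
        lam (2*k) + (3/512) * γ (k+2) - (25/512) * γ (k+1)
        + (75/256) * γ (k+0) + (75/256) * γ (k+(-1))
        - (25/512) * γ (k+(-2)) + (3/512) * γ (k+(-3)) := by
      intro k; rw [hlam' k]
      norm_num [show (k:ℤ) + (-1) = k-1 by ring, show (k:ℤ) + (-2) = k-2 by ring,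
        show (k:ℤ) + (-3) = k-3 by ring]
    rw [finsum_congr key]
    have F : ∀ (c : ℝ) (t : ℤ), (support fun k => c * γ (k+t)).Finite :=
      fun c t => mulc_fin c _ (hγfin' t)
    have A : ∀ (c : ℝ) (t : ℤ), ∑ᶠ k, c * γ (k+t) = c * (H - G) := by
      intro c t
      have hs := smul_finsum' c (f := fun k : ℤ => γ (k+t)) (hγfin' t)
      simp only [smul_eq_mul] at hs
      rw [← hs, hγshift t]
    have hfin0 : (support fun k : ℤ => lam (2*k)).Finite := aff_fin lam hfin 2 0 (by norm_num)
      |>.subset (by intro m; simp [mem_support])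
    rw [finsum_add_distrib ?_ (F _ (-3)), finsum_sub_distrib ?_ (F _ (-2)),
        finsum_add_distrib ?_ (F _ (-1)), finsum_add_distrib ?_ (F _ 0),
        finsum_sub_distrib ?_ (F _ 1), finsum_add_distrib hfin0 (F _ 2)]
    · have h0 : ∑ᶠ k : ℤ, lam (2*k) = G := by
        have := heshift 0
        simp only [show ∀ m : ℤ, 2*m + 0 = 2*m from fun m => by ring] at this
        rw [this]; norm_num
      rw [h0, A, A, A, A, A, A]; ring
    · exact (hfin0.union (F _ 2)).subset (support_add _ _)
    · exact ((hfin0.union (F _ 2)).subset (support_add _ _) |>.union (F _ 1)).subset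
        (support_sub _ _)
    · exact (((hfin0.union (F _ 2)).subset (support_add _ _) |>.union (F _ 1)).subset
        (support_sub _ _) |>.union (F _ 0)).subset (support_add _ _)
    · exact ((((hfin0.union (F _ 2)).subset (support_add _ _) |>.union (F _ 1)).subset
        (support_sub _ _) |>.union (F _ 0)).subset (support_add _ _) |>.union (F _ (-1))).subset
        (support_add _ _)
    · exact (((((hfin0.union (F _ 2)).subset (support_add _ _) |>.union (F _ 1)).subset
        (support_sub _ _) |>.union (F _ 0)).subset (support_add _ _) |>.union (F _ (-1))).subset
        (support_add _ _) |>.union (F _ (-2))).subset (support_sub _ _)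
  -- even/odd split of lam
  have hsplit : ∑ᶠ j, lam j = G + H := by
    have huniv : (Set.univ : Set ℤ) =
        Set.range (fun k : ℤ => 2 * k) ∪ Set.range (fun k : ℤ => 2 * k + 1) := by
      ext j; simp only [mem_univ, mem_union, mem_range, true_iff]
      rcases Int.even_or_odd j with ⟨s, hs⟩ | ⟨s, hs⟩
      · exact Or.inl ⟨s, by omega⟩
      · exact Or.inr ⟨s, by omega⟩
    have hdisj : Disjoint (Set.range (fun k : ℤ => 2 * k))
        (Set.range (fun k : ℤ => 2 * k + 1)) := by
      rw [Set.disjoint_left]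
      rintro j ⟨a, ha⟩ ⟨b, hb⟩; simp only at ha hb; omega
    rw [← finsum_mem_univ lam, huniv,
      finsum_mem_union' hdisj (hfin.inter_of_right _) (hfin.inter_of_right _),
      finsum_mem_range (fun a b hab => by simpa using hab : Injective fun k : ℤ => 2 * k),
      finsum_mem_range (fun a b hab => by simp at hab; omega : Injective fun k : ℤ => 2 * k + 1)]
  rw [hsplit, hSlam']; ring
end

section
/- Let λ : ℤ → ℝ be finitely supported and let λ' be its coarse scaling coefficients under the 6.2 forward wavelet transform. Then Σ_{j∈ℤ} j·λ(j) = 4·Σ_{k∈ℤ} k·λ'(k). (Conservation of the first discrete moment across levels by the lifted sixth-order interpolating wavelet: with grid coordinates x_{L+1,j} = j·2^{-(L+1)} on the fine level and x_{L,k} = k·2^{-L} on the coarse level, this is Σ_j λ(j)·x_{L+1,j} = 2·Σ_k λ'(k)·x_{L,k}.) -/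
open Function Set

private lemma wv_vec7_0 {α : Type*} (a b c d e f g : α) : ![a,b,c,d,e,f,g] 0 = a := rfl
private lemma wv_vec7_1 {α : Type*} (a b c d e f g : α) : ![a,b,c,d,e,f,g] 1 = b := rfl
private lemma wv_vec7_2 {α : Type*} (a b c d e f g : α) : ![a,b,c,d,e,f,g] 2 = c := rfl
private lemma wv_vec7_3 {α : Type*} (a b c d e f g : α) : ![a,b,c,d,e,f,g] 3 = d := rfl
private lemma wv_vec7_4 {α : Type*} (a b c d e f g : α) : ![a,b,c,d,e,f,g] 4 = e := rfl
private lemma wv_vec7_5 {α : Type*} (a b c d e f g : α) : ![a,b,c,d,e,f,g] 5 = f := rfl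
private lemma wv_vec7_6 {α : Type*} (a b c d e f g : α) : ![a,b,c,d,e,f,g] 6 = g := rfl

private lemma wv_finsum_shift (f : ℤ → ℝ) (t : ℤ) : ∑ᶠ m : ℤ, f (m + t) = ∑ᶠ m, f m := by
  simpa using finsum_comp_equiv (Equiv.addRight t) (f := f)

private lemma wv_supp_comp {f : ℤ → ℝ} (hf : (support f).Finite) (g : ℤ → ℤ)
    (hg : Function.Injective g) : (support fun m => f (g m)).Finite := by
  have h : (support fun m => f (g m)) = g ⁻¹' (support f) := rfl
  rw [h]
  exact Set.Finite.preimage hg.injOn hf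

/-- support of `m ↦ c * g (m + t)` is finite. -/
private lemma wv_suppA {g : ℤ → ℝ} (hg : (support g).Finite) (c : ℝ) (t : ℤ) :
    (support fun m : ℤ => c * g (m + t)).Finite := by
  refine (wv_supp_comp hg (fun m => m + t) (fun a b h => by dsimp only at h; omega)).subset ?_
  intro m hm h0
  exact hm (by simp only [h0, mul_zero])

/-- support of `m ↦ m * (c * g (m + t))` is finite. -/
private lemma wv_suppB {g : ℤ → ℝ} (hg : (support g).Finite) (c : ℝ) (t : ℤ) :
    (support fun m : ℤ => (m : ℝ) * (c * g (m + t))).Finite := by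
  refine (wv_supp_comp hg (fun m => m + t) (fun a b h => by dsimp only at h; omega)).subset ?_
  intro m hm h0
  exact hm (by simp only [h0, mul_zero])

private lemma wv_supp_wt {g : ℤ → ℝ} (hg : (support g).Finite) :
    (support fun m : ℤ => (m : ℝ) * g m).Finite := by
  refine hg.subset ?_
  intro m hm h0
  exact hm (by simp only [h0, mul_zero])

private lemma wv_W0 {g : ℤ → ℝ} (hg : (support g).Finite) (c : ℝ) (t : ℤ) :
    ∑ᶠ k : ℤ, c * g (k + t) = c * ∑ᶠ m, g m := by
  rw [mul_finsum g c]
  exact wv_finsum_shift (fun m => c * g m) t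

private lemma wv_W1 {g : ℤ → ℝ} (hg : (support g).Finite) (c : ℝ) (t : ℤ) :
    ∑ᶠ k : ℤ, (k : ℝ) * (c * g (k + t)) =
      c * (∑ᶠ m : ℤ, (m : ℝ) * g m) - c * (t : ℝ) * ∑ᶠ m, g m := by
  have h1 : ∑ᶠ k : ℤ, (k : ℝ) * (c * g (k + t))
      = ∑ᶠ m : ℤ, (c * ((m : ℝ) * g m) - (c * (t : ℝ)) * g m) := by
    rw [← wv_finsum_shift (fun m => c * ((m : ℝ) * g m) - (c * (t : ℝ)) * g m) t]
    apply finsum_congr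
    intro k
    push_cast
    ring
  have hA : (support fun m : ℤ => c * ((m : ℝ) * g m)).Finite := by
    refine hg.subset ?_
    intro m hm h0
    exact hm (by simp only [h0, mul_zero])
  have hB : (support fun m : ℤ => (c * (t : ℝ)) * g m).Finite := by
    refine hg.subset ?_
    intro m hm h0
    exact hm (by simp only [h0, mul_zero])
  rw [h1, finsum_sub_distrib hA hB, ← mul_finsum _ c, ← mul_finsum _ (c * (t : ℝ))]

/-- even/odd splitting of a finitely supported sum over ℤ. -/
private lemma wv_split (f : ℤ → ℝ) (hf : (support f).Finite) :
    ∑ᶠ j : ℤ, f j = (∑ᶠ k : ℤ, f (2 * k)) + ∑ᶠ k : ℤ, f (2 * k + 1) := by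
  have he : Function.Injective (fun k : ℤ => 2 * k) := fun a b h => by dsimp only at h; omega
  have ho : Function.Injective (fun k : ℤ => 2 * k + 1) := fun a b h => by dsimp only at h; omega
  have hu : Set.range (fun k : ℤ => 2 * k) ∪ Set.range (fun k : ℤ => 2 * k + 1) = Set.univ := by
    ext j
    simp only [Set.mem_union, Set.mem_range, Set.mem_univ, iff_true]
    rcases Int.even_or_odd j with ⟨k, hk⟩ | ⟨k, hk⟩
    · exact Or.inl ⟨k, show 2 * k = j by omega⟩
    · exact Or.inr ⟨k, show 2 * k + 1 = j by omega⟩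
  have hd : Disjoint (Set.range (fun k : ℤ => 2 * k)) (Set.range (fun k : ℤ => 2 * k + 1)) := by
    rw [Set.disjoint_left]
    rintro a ⟨k, hk⟩ ⟨l, hl⟩
    dsimp only at hk hl
    omega
  rw [← finsum_mem_univ, ← hu,
    finsum_mem_union' hd (hf.inter_of_right _) (hf.inter_of_right _),
    finsum_mem_range he, finsum_mem_range ho]

/-- Conservation of the first discrete moment across levels by the lifted
sixth-order (6.2) interpolating wavelet. -/
theorem wavelet_6_2_conserves_first_moment
    (lam : ℤ → ℝ) (hfin : (Function.support lam).Finite)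
    (γ : ℤ → ℝ)
    (hγ : ∀ m : ℤ, γ m =
      lam (2 * m + 1) - (3 / 256) * lam (2 * m - 4) + (25 / 256) * lam (2 * m - 2)
        - (75 / 128) * lam (2 * m) - (75 / 128) * lam (2 * m + 2)
        + (25 / 256) * lam (2 * m + 4) - (3 / 256) * lam (2 * m + 6))
    (lam' : ℤ → ℝ)
    (hlam' : ∀ k : ℤ, lam' k =
      lam (2 * k) + (3 / 512) * γ (k + 2) - (25 / 512) * γ (k + 1)
        + (75 / 256) * γ k + (75 / 256) * γ (k - 1)
        - (25 / 512) * γ (k - 2) + (3 / 512) * γ (k - 3)) :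
    ∑ᶠ j : ℤ, (j : ℝ) * lam j = 4 * ∑ᶠ k : ℤ, (k : ℝ) * lam' k := by
  set ge : ℤ → ℝ := fun m => lam (2 * m) with hge_def
  set go : ℤ → ℝ := fun m => lam (2 * m + 1) with hgo_def
  have hge : (support ge).Finite := wv_supp_comp hfin (fun m => 2 * m) (fun a b h => by dsimp only at h; omega)
  have hgo : (support go).Finite :=
    wv_supp_comp hfin (fun m => 2 * m + 1) (fun a b h => by dsimp only at h; omega)
  set A := ∑ᶠ m : ℤ, (m : ℝ) * ge m with hA_def
  set B := ∑ᶠ m : ℤ, ge m with hB_def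
  set C := ∑ᶠ m : ℤ, (m : ℝ) * go m with hC_def
  set D := ∑ᶠ m : ℤ, go m with hD_def
  -- γ as a 7-term combination of shifted atoms
  set F : Fin 7 → ℤ → ℝ :=
    ![fun m => (1 : ℝ) * go (m + 0),
      fun m => (-3 / 256 : ℝ) * ge (m + (-2)),
      fun m => (25 / 256 : ℝ) * ge (m + (-1)),
      fun m => (-75 / 128 : ℝ) * ge (m + 0),
      fun m => (-75 / 128 : ℝ) * ge (m + 1),
      fun m => (25 / 256 : ℝ) * ge (m + 2),
      fun m => (-3 / 256 : ℝ) * ge (m + 3)] with hF_def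
  have hγeq : ∀ m : ℤ, γ m = ∑ i : Fin 7, F i m := by
    intro m
    rw [hγ m]
    simp only [hF_def, Fin.sum_univ_seven, wv_vec7_0, wv_vec7_1, wv_vec7_2,
      wv_vec7_3, wv_vec7_4, wv_vec7_5, wv_vec7_6,
      hge_def, hgo_def]
    have e0 : 2 * (m + 0) + 1 = 2 * m + 1 := by ring
    have e1 : 2 * (m + (-2)) = 2 * m - 4 := by ring
    have e2 : 2 * (m + (-1)) = 2 * m - 2 := by ring
    have e3 : 2 * (m + 0) = 2 * m := by ring
    have e4 : 2 * (m + 1) = 2 * m + 2 := by ring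
    have e5 : 2 * (m + 2) = 2 * m + 4 := by ring
    have e6 : 2 * (m + 3) = 2 * m + 6 := by ring
    rw [e0, e1, e2, e3, e4, e5, e6]
    ring
  have hFfin : ∀ i : Fin 7, (support fun m => F i m).Finite := by
    intro i
    fin_cases i
    · exact wv_suppA hgo 1 0
    · exact wv_suppA hge (-3 / 256) (-2)
    · exact wv_suppA hge (25 / 256) (-1)
    · exact wv_suppA hge (-75 / 128) 0
    · exact wv_suppA hge (-75 / 128) 1
    · exact wv_suppA hge (25 / 256) 2
    · exact wv_suppA hge (-3 / 256) 3
  have hγfin : (support γ).Finite := by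
    have hU : (⋃ i : Fin 7, support fun m => F i m).Finite := Set.finite_iUnion hFfin
    refine hU.subset ?_
    intro m hm
    simp only [Set.mem_iUnion, mem_support]
    by_contra hc
    push_neg at hc
    exact hm (by rw [hγeq m]; exact Finset.sum_eq_zero fun i _ => hc i)
  -- G0 = D - B
  have hG0 : ∑ᶠ m : ℤ, γ m = D - B := by
    rw [finsum_congr hγeq, finsum_sum_comm Finset.univ (fun m i => F i m)
      (fun i _ => hFfin i)]
    simp only [hF_def, Fin.sum_univ_seven, wv_vec7_0, wv_vec7_1, wv_vec7_2,
      wv_vec7_3, wv_vec7_4, wv_vec7_5, wv_vec7_6,]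
    rw [wv_W0 hgo 1 0, wv_W0 hge (-3 / 256) (-2), wv_W0 hge (25 / 256) (-1),
      wv_W0 hge (-75 / 128) 0, wv_W0 hge (-75 / 128) 1, wv_W0 hge (25 / 256) 2,
      wv_W0 hge (-3 / 256) 3]
    rw [← hB_def, ← hD_def]
    ring
  -- G1 = C - A + B/2
  have hG1 : ∑ᶠ m : ℤ, (m : ℝ) * γ m = C - A + B / 2 := by
    have h : ∀ m : ℤ, (m : ℝ) * γ m = ∑ i : Fin 7, (m : ℝ) * F i m := by
      intro m
      rw [hγeq m, Finset.mul_sum]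
    rw [finsum_congr h, finsum_sum_comm Finset.univ (fun (m : ℤ) (i : Fin 7) => (m : ℝ) * F i m)
      (fun i _ => (hFfin i).subset (fun m hm h0 => hm (by simp only [h0, mul_zero])))]
    simp only [hF_def, Fin.sum_univ_seven, wv_vec7_0, wv_vec7_1, wv_vec7_2,
      wv_vec7_3, wv_vec7_4, wv_vec7_5, wv_vec7_6,]
    rw [wv_W1 hgo 1 0, wv_W1 hge (-3 / 256) (-2), wv_W1 hge (25 / 256) (-1),
      wv_W1 hge (-75 / 128) 0, wv_W1 hge (-75 / 128) 1, wv_W1 hge (25 / 256) 2,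
      wv_W1 hge (-3 / 256) 3]
    rw [← hA_def, ← hB_def, ← hC_def, ← hD_def]
    push_cast
    ring
  -- the coarse moment
  set H : Fin 7 → ℤ → ℝ :=
    ![fun k => (1 : ℝ) * ge (k + 0),
      fun k => (3 / 512 : ℝ) * γ (k + 2),
      fun k => (-25 / 512 : ℝ) * γ (k + 1),
      fun k => (75 / 256 : ℝ) * γ (k + 0),
      fun k => (75 / 256 : ℝ) * γ (k + (-1)),
      fun k => (-25 / 512 : ℝ) * γ (k + (-2)),
      fun k => (3 / 512 : ℝ) * γ (k + (-3))] with hH_def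
  have hHeq : ∀ k : ℤ, lam' k = ∑ i : Fin 7, H i k := by
    intro k
    rw [hlam' k]
    simp only [hH_def, Fin.sum_univ_seven, wv_vec7_0, wv_vec7_1, wv_vec7_2,
      wv_vec7_3, wv_vec7_4, wv_vec7_5, wv_vec7_6,
      hge_def]
    have e0 : 2 * (k + 0) = 2 * k := by ring
    have e3 : k + 0 = k := by ring
    have e4 : k + (-1) = k - 1 := by ring
    have e5 : k + (-2) = k - 2 := by ring
    have e6 : k + (-3) = k - 3 := by ring
    rw [e0, e3, e4, e5, e6]
    ring
  have hHfin : ∀ i : Fin 7, (support fun k => H i k).Finite := by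
    intro i
    fin_cases i
    · exact wv_suppA hge 1 0
    · exact wv_suppA hγfin (3 / 512) 2
    · exact wv_suppA hγfin (-25 / 512) 1
    · exact wv_suppA hγfin (75 / 256) 0
    · exact wv_suppA hγfin (75 / 256) (-1)
    · exact wv_suppA hγfin (-25 / 512) (-2)
    · exact wv_suppA hγfin (3 / 512) (-3)
  have hRHS : ∑ᶠ k : ℤ, (k : ℝ) * lam' k = A + (1 / 2) * (C - A + B / 2) + (1 / 4) * (D - B) := by
    have h : ∀ k : ℤ, (k : ℝ) * lam' k = ∑ i : Fin 7, (k : ℝ) * H i k := by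
      intro k
      rw [hHeq k, Finset.mul_sum]
    rw [finsum_congr h, finsum_sum_comm Finset.univ (fun (k : ℤ) (i : Fin 7) => (k : ℝ) * H i k)
      (fun i _ => (hHfin i).subset (fun m hm h0 => hm (by simp only [h0, mul_zero])))]
    simp only [hH_def, Fin.sum_univ_seven, wv_vec7_0, wv_vec7_1, wv_vec7_2,
      wv_vec7_3, wv_vec7_4, wv_vec7_5, wv_vec7_6,]
    rw [wv_W1 hge 1 0, wv_W1 hγfin (3 / 512) 2, wv_W1 hγfin (-25 / 512) 1,
      wv_W1 hγfin (75 / 256) 0, wv_W1 hγfin (75 / 256) (-1), wv_W1 hγfin (-25 / 512) (-2),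
      wv_W1 hγfin (3 / 512) (-3)]
    rw [hG0, hG1, ← hA_def]
    push_cast
    ring
  -- the fine moment
  have hwt : (support fun j : ℤ => (j : ℝ) * lam j).Finite := by
    refine hfin.subset ?_
    intro j hj h0
    exact hj (by simp only [h0, mul_zero])
  have hLHS : ∑ᶠ j : ℤ, (j : ℝ) * lam j = 2 * A + (2 * C + D) := by
    rw [wv_split (fun j => (j : ℝ) * lam j) hwt]
    have h1 : ∑ᶠ k : ℤ, ((2 * k : ℤ) : ℝ) * lam (2 * k) = 2 * A := by
      have : ∀ k : ℤ, ((2 * k : ℤ) : ℝ) * lam (2 * k) = 2 * ((k : ℝ) * ge k) := by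
        intro k
        simp only [hge_def]
        push_cast
        ring
      rw [finsum_congr this, ← mul_finsum _ _]
    have h2 : ∑ᶠ k : ℤ, ((2 * k + 1 : ℤ) : ℝ) * lam (2 * k + 1) = 2 * C + D := by
      have hc : ∀ k : ℤ, ((2 * k + 1 : ℤ) : ℝ) * lam (2 * k + 1)
          = 2 * ((k : ℝ) * go k) + go k := by
        intro k
        simp only [hgo_def]
        push_cast
        ring
      have hfa : (support fun k : ℤ => 2 * ((k : ℝ) * go k)).Finite := by
        refine hgo.subset ?_
        intro k hk h0
        exact hk (by simp only [h0, mul_zero])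
      rw [finsum_congr hc, finsum_add_distrib hfa hgo, ← mul_finsum _ _]
    rw [h1, h2]
  rw [hLHS, hRHS]
  ring
end

section
/- Let f : ℝ → ℝ be twice continuously differentiable with bounded second derivative, let h > 0, and define λ : ℤ → ℝ by λ(j) = f(j·h). Then the coarse scaling coefficients λ' of λ under the 2.2 forward wavelet transform satisfy |λ'(k) - f(2k·h)| ≤ (1/4)·h²·sup_{t∈ℝ} |f''(t)| for every k ∈ ℤ. (For lifted interpolating wavelets the coarse scaling coefficients no longer equal the function samples, but they deviate from them by at most O(h^N) with N = 2.) -/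
/-- For the lifted second-order (2.2) interpolating wavelet, the coarse scaling
coefficients of samples of a `C²` function with bounded second derivative
deviate from the coarse-grid function samples by at most `(1/4)·h²·sup |f''|`. -/
theorem wavelet_2_2_coarse_coefficients_close_to_samples
    (f : ℝ → ℝ) (hf : ContDiff ℝ 2 f)
    (hbdd : BddAbove (Set.range fun t : ℝ => |deriv (deriv f) t|))
    (h : ℝ) (hh : 0 < h)
    (lam : ℤ → ℝ) (hlam : ∀ j : ℤ, lam j = f ((j : ℝ) * h))
    (γ : ℤ → ℝ)
    (hγ : ∀ m : ℤ, γ m = lam (2 * m + 1) - (1 / 2) * (lam (2 * m) + lam (2 * m + 2)))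
    (lam' : ℤ → ℝ)
    (hlam' : ∀ k : ℤ, lam' k = lam (2 * k) + (1 / 4) * (γ (k - 1) + γ k)) :
    ∀ k : ℤ, |lam' k - f (((2 * k : ℤ) : ℝ) * h)| ≤
      (1 / 4) * h ^ 2 * ⨆ t : ℝ, |deriv (deriv f) t| := by
  set M : ℝ := ⨆ t : ℝ, |deriv (deriv f) t| with hM
  have hMle : ∀ t : ℝ, |deriv (deriv f) t| ≤ M := fun t =>
    le_ciSup hbdd t
  have hM0 : 0 ≤ M := le_trans (abs_nonneg _) (hMle 0)
  have hC1 : ContDiff ℝ 1 (deriv f) := by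
    have := (contDiff_succ_iff_deriv.mp (show ContDiff ℝ (1+1) f from hf)).2.2
    exact this
  have hdf : Differentiable ℝ f := hf.differentiable (by norm_num)
  have hdf' : Differentiable ℝ (deriv f) := hC1.differentiable (by norm_num)
  -- Lipschitz bound on f'
  have hlip1 : ∀ a b : ℝ, |deriv f b - deriv f a| ≤ M * |b - a| := by
    intro a b
    have := Convex.norm_image_sub_le_of_norm_deriv_le
      (f := deriv f) (s := Set.univ) (fun x _ => hdf' x)
      (fun x _ => by simpa using hMle x)
      convex_univ (Set.mem_univ a) (Set.mem_univ b)
    simpa [Real.norm_eq_abs] using this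
  -- g t = f (t + h) - f t
  set g : ℝ → ℝ := fun t => f (t + h) - f t with hg
  have hgd : ∀ t : ℝ, HasDerivAt g (deriv f (t + h) - deriv f t) t := by
    intro t
    have h1 : HasDerivAt (fun t : ℝ => f (t + h)) (deriv f (t + h)) t := by
      have := ((hdf (t + h)).hasDerivAt).comp t
        ((hasDerivAt_id t).add_const h)
      simpa [Function.comp_def] using this
    exact h1.sub (hdf t).hasDerivAt
  have hlip2 : ∀ a b : ℝ, |g b - g a| ≤ (M * h) * |b - a| := by
    intro a b
    have := Convex.norm_image_sub_le_of_norm_deriv_le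
      (f := g) (s := Set.univ)
      (fun x _ => (hgd x).differentiableAt)
      (fun x _ => by
        rw [Real.norm_eq_abs, (hgd x).deriv]
        calc |deriv f (x + h) - deriv f x| ≤ M * |x + h - x| := hlip1 x (x + h)
          _ = M * h := by rw [show x + h - x = h by ring, abs_of_pos hh])
      convex_univ (Set.mem_univ a) (Set.mem_univ b)
    simpa [Real.norm_eq_abs] using this
  -- bound on γ
  have hγbd : ∀ m : ℤ, |γ m| ≤ (1 / 2) * (M * h ^ 2) := by
    intro m
    set x : ℝ := (2 * m : ℤ) * h with hx
    have e1 : ((2 * m + 1 : ℤ) : ℝ) * h = x + h := by push_cast [hx]; ring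
    have e2 : ((2 * m + 2 : ℤ) : ℝ) * h = x + 2 * h := by push_cast [hx]; ring
    have hγm : γ m = -(1 / 2) * (g (x + h) - g x) := by
      rw [hγ, hlam, hlam, hlam, e1, e2, hg]
      show f (x + h) - 1 / 2 * (f x + f (x + 2 * h)) =
        -(1/2) * ((f (x + h + h) - f (x + h)) - (f (x + h) - f x))
      ring_nf
    rw [hγm, abs_mul]
    have := hlip2 x (x + h)
    have hxh : |x + h - x| = h := by rw [show x + h - x = h by ring, abs_of_pos hh]
    rw [hxh] at this
    calc |(-(1/2) : ℝ)| * |g (x + h) - g x| ≤ (1/2) * (M * h * h) := by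
          rw [show |(-(1/2) : ℝ)| = 1/2 by norm_num]
          exact mul_le_mul_of_nonneg_left this (by norm_num)
      _ = (1/2) * (M * h ^ 2) := by ring
  intro k
  have key : lam' k - f (((2 * k : ℤ) : ℝ) * h) = (1 / 4) * (γ (k - 1) + γ k) := by
    rw [hlam', hlam]; ring
  rw [key, abs_mul, show |(1/4 : ℝ)| = 1/4 by norm_num]
  calc (1/4) * |γ (k - 1) + γ k|
      ≤ (1/4) * (|γ (k - 1)| + |γ k|) :=
        mul_le_mul_of_nonneg_left (abs_add_le _ _) (by norm_num)
    _ ≤ (1/4) * ((1/2) * (M * h ^ 2) + (1/2) * (M * h ^ 2)) :=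
        mul_le_mul_of_nonneg_left (add_le_add (hγbd _) (hγbd _)) (by norm_num)
    _ = (1/4) * h ^ 2 * M := by ring
end

section
/- Let λ : ℤ → ℝ be finitely supported, let λ' be its coarse scaling coefficients under the 2.2 forward wavelet transform, and let λ̂ : ℤ → ℝ be the reconstruction from λ' with all detail coefficients set to zero, i.e. λ̂(2k) = λ'(k) and λ̂(2m+1) = (1/2)·(λ̂(2m) + λ̂(2m+2)). Then Σ_{j∈ℤ} λ̂(j) = Σ_{j∈ℤ} λ(j). (Discarding all detail coefficients in the lifted second-order interpolating wavelet transform leaves the zeroth discrete moment of the signal exactly unchanged, in contrast to non-lifted interpolating wavelets.) -/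
open Function Set

private lemma wavelet_comp_fin {f : ℤ → ℝ} (hf : (support f).Finite) {g : ℤ → ℤ}
    (hg : Function.Injective g) : (support fun k => f (g k)).Finite :=
  hf.preimage hg.injOn

/-- Splitting a finitely supported sum over ℤ into even and odd parts. -/
private lemma wavelet_split (f : ℤ → ℝ) (hf : (support f).Finite) :
    ∑ᶠ j : ℤ, f j = (∑ᶠ k : ℤ, f (2 * k)) + ∑ᶠ m : ℤ, f (2 * m + 1) := by
  have he : Function.Injective (fun k : ℤ => 2 * k) := by
    intro a b h; dsimp only at h; omega
  have ho : Function.Injective (fun m : ℤ => 2 * m + 1) := by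
    intro a b h; dsimp only at h; omega
  have huniv : Set.range (fun k : ℤ => 2 * k) ∪ Set.range (fun m : ℤ => 2 * m + 1) =
      Set.univ := by
    ext j
    simp only [mem_union, mem_range, mem_univ, iff_true]
    rcases Int.even_or_odd j with ⟨k, hk⟩ | ⟨k, hk⟩
    · exact Or.inl ⟨k, by omega⟩
    · exact Or.inr ⟨k, by omega⟩
  have hdisj : Disjoint (Set.range fun k : ℤ => 2 * k)
      (Set.range fun m : ℤ => 2 * m + 1) := by
    rw [Set.disjoint_left]
    rintro x ⟨a, rfl⟩ ⟨b, hb⟩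
    change 2 * b + 1 = 2 * a at hb
    omega
  rw [← finsum_mem_univ f, ← huniv,
    finsum_mem_union' hdisj (hf.inter_of_right _) (hf.inter_of_right _),
    finsum_mem_range he, finsum_mem_range ho]

private lemma wavelet_shift (f : ℤ → ℝ) (c : ℤ) : ∑ᶠ k : ℤ, f (k + c) = ∑ᶠ k : ℤ, f k :=
  finsum_comp_equiv (Equiv.addRight c)

/-- Discarding all detail coefficients in the lifted second-order (2.2)
interpolating wavelet transform leaves the zeroth discrete moment of the signal
exactly unchanged. -/
theorem wavelet_2_2_compression_conserves_zeroth_moment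
    (lam : ℤ → ℝ) (hfin : (Function.support lam).Finite)
    (γ : ℤ → ℝ)
    (hγ : ∀ m : ℤ, γ m = lam (2 * m + 1) - (1 / 2) * (lam (2 * m) + lam (2 * m + 2)))
    (lam' : ℤ → ℝ)
    (hlam' : ∀ k : ℤ, lam' k = lam (2 * k) + (1 / 4) * (γ (k - 1) + γ k))
    (lamhat : ℤ → ℝ)
    (hhat_even : ∀ k : ℤ, lamhat (2 * k) = lam' k)
    (hhat_odd : ∀ m : ℤ, lamhat (2 * m + 1) = (1 / 2) * (lamhat (2 * m) + lamhat (2 * m + 2))) :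
    ∑ᶠ j : ℤ, lamhat j = ∑ᶠ j : ℤ, lam j := by
  classical
  have inj0 : Function.Injective (fun m : ℤ => 2 * m) := by
    intro a b h; dsimp only at h; omega
  have inj1 : Function.Injective (fun m : ℤ => 2 * m + 1) := by
    intro a b h; dsimp only at h; omega
  have inj2 : Function.Injective (fun m : ℤ => 2 * m + 2) := by
    intro a b h; dsimp only at h; omega
  have injs : Function.Injective (fun m : ℤ => m - 1) := by
    intro a b h; dsimp only at h; omega
  have injp : Function.Injective (fun m : ℤ => m + 1) := by
    intro a b h; dsimp only at h; omega
  set A : ℤ → ℝ := fun m => lam (2 * m) with hA_def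
  set B : ℤ → ℝ := fun m => lam (2 * m + 1) with hB_def
  set C : ℤ → ℝ := fun m => lam (2 * m + 2) with hC_def
  have hγ' : ∀ m : ℤ, γ m = B m - (1 / 2) * (A m + C m) := hγ
  have hlam'' : ∀ k : ℤ, lam' k = A k + (1 / 4) * (γ (k - 1) + γ k) := hlam'
  have hA : (support A).Finite := wavelet_comp_fin hfin inj0
  have hB : (support B).Finite := wavelet_comp_fin hfin inj1
  have hC : (support C).Finite := wavelet_comp_fin hfin inj2
  -- γ has finite support
  have hγfin : (support γ).Finite := by
    refine ((hB.union hA).union hC).subset ?_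
    intro m hm
    simp only [mem_union, mem_support] at *
    by_contra h
    push_neg at h
    apply hm
    rw [hγ' m, h.1.1, h.1.2, h.2]
    ring
  have hγs : (support fun k => γ (k - 1)).Finite := wavelet_comp_fin hγfin injs
  -- lam' has finite support
  have hlamfin' : (support lam').Finite := by
    refine ((hA.union hγs).union hγfin).subset ?_
    intro k hk
    simp only [mem_union, mem_support] at *
    by_contra h
    push_neg at h
    apply hk
    rw [hlam'' k, h.1.1, h.1.2, h.2]
    ring
  have hlamp' : (support fun k => lam' (k + 1)).Finite := wavelet_comp_fin hlamfin' injp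
  -- lamhat has finite support
  have hhatfin : (support lamhat).Finite := by
    refine (((hlamfin'.image (fun k : ℤ => 2 * k)).union
      ((hlamfin'.union hlamp').image (fun m : ℤ => 2 * m + 1)))).subset ?_
    intro j hj
    simp only [mem_support] at hj
    rcases Int.even_or_odd j with ⟨k, hk⟩ | ⟨k, hk⟩
    · left
      refine ⟨k, ?_, by show (2 * k : ℤ) = j; omega⟩
      simp only [mem_support]
      intro h0
      apply hj
      have hj2 : j = 2 * k := by omega
      rw [hj2, hhat_even, h0]
    · right
      refine ⟨k, ?_, by show (2 * k + 1 : ℤ) = j; omega⟩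
      simp only [mem_union, mem_support, mem_preimage]
      by_contra h
      push_neg at h
      apply hj
      have hj2 : j = 2 * k + 1 := by omega
      have h22 : (2 : ℤ) * k + 2 = 2 * (k + 1) := by ring
      rw [hj2, hhat_odd, hhat_even, h22, hhat_even, h.1, h.2]
      ring
  -- key sums
  have hCE : ∑ᶠ m : ℤ, C m = ∑ᶠ k : ℤ, A k := by
    have hAC : ∀ m : ℤ, C m = A (m + 1) := by
      intro m
      show lam (2 * m + 2) = lam (2 * (m + 1))
      ring_nf
    rw [finsum_congr hAC, wavelet_shift A 1]
  have hACfin : (support fun m => (1/2 : ℝ) * (A m + C m)).Finite := by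
    refine (hA.union hC).subset ?_
    intro m hm
    simp only [mem_union, mem_support] at *
    by_contra h
    push_neg at h
    apply hm
    rw [h.1, h.2]
    ring
  have hACfin' : (support fun m => A m + C m).Finite := by
    refine (hA.union hC).subset ?_
    intro m hm
    simp only [mem_union, mem_support] at *
    by_contra h
    push_neg at h
    apply hm
    rw [h.1, h.2]
    ring
  have hG : ∑ᶠ m : ℤ, γ m = (∑ᶠ m : ℤ, B m) - ∑ᶠ k : ℤ, A k := by
    calc ∑ᶠ m : ℤ, γ m = ∑ᶠ m : ℤ, (B m - (1/2) * (A m + C m)) := finsum_congr hγ'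
      _ = (∑ᶠ m : ℤ, B m) - ∑ᶠ m : ℤ, (1/2) * (A m + C m) :=
          finsum_sub_distrib hB hACfin
      _ = (∑ᶠ m : ℤ, B m) - (1/2) * ∑ᶠ m : ℤ, (A m + C m) := by
          rw [mul_finsum]
      _ = (∑ᶠ m : ℤ, B m) - (1/2) * ((∑ᶠ k : ℤ, A k) + ∑ᶠ k : ℤ, A k) := by
          rw [finsum_add_distrib hA hC, hCE]
      _ = (∑ᶠ m : ℤ, B m) - ∑ᶠ k : ℤ, A k := by ring
  have hγsG : ∑ᶠ k : ℤ, γ (k - 1) = ∑ᶠ m : ℤ, γ m := by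
    have hh : ∀ k : ℤ, γ (k - 1) = γ (k + (-1)) := by
      intro k; ring_nf
    rw [finsum_congr hh, wavelet_shift γ (-1)]
  have hγADDfin : (support fun k => (1/4 : ℝ) * (γ (k - 1) + γ k)).Finite := by
    refine (hγs.union hγfin).subset ?_
    intro k hk
    simp only [mem_union, mem_support] at *
    by_contra h
    push_neg at h
    apply hk
    rw [h.1, h.2]
    ring
  have hγADDfin' : (support fun k => γ (k - 1) + γ k).Finite := by
    refine (hγs.union hγfin).subset ?_
    intro k hk
    simp only [mem_union, mem_support] at *
    by_contra h
    push_neg at h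
    apply hk
    rw [h.1, h.2]
    ring
  have hL : ∑ᶠ k : ℤ, lam' k
      = (∑ᶠ k : ℤ, A k) + (1/2) * ((∑ᶠ m : ℤ, B m) - ∑ᶠ k : ℤ, A k) := by
    calc ∑ᶠ k : ℤ, lam' k
        = ∑ᶠ k : ℤ, (A k + (1/4) * (γ (k - 1) + γ k)) := finsum_congr hlam''
      _ = (∑ᶠ k : ℤ, A k) + ∑ᶠ k : ℤ, (1/4) * (γ (k - 1) + γ k) :=
          finsum_add_distrib hA hγADDfin
      _ = (∑ᶠ k : ℤ, A k) + (1/4) * ∑ᶠ k : ℤ, (γ (k - 1) + γ k) := by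
          rw [mul_finsum]
      _ = (∑ᶠ k : ℤ, A k)
            + (1/4) * ((∑ᶠ m : ℤ, γ m) + ∑ᶠ m : ℤ, γ m) := by
          rw [finsum_add_distrib hγs hγfin, hγsG]
      _ = (∑ᶠ k : ℤ, A k) + (1/2) * ((∑ᶠ m : ℤ, B m) - ∑ᶠ k : ℤ, A k) := by
          rw [hG]; ring
  have hlampfin' : (support fun m => (1/2 : ℝ) * (lam' m + lam' (m + 1))).Finite := by
    refine (hlamfin'.union hlamp').subset ?_
    intro m hm
    simp only [mem_union, mem_support] at *
    by_contra h
    push_neg at h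
    apply hm
    rw [h.1, h.2]
    ring
  have hlampfin'' : (support fun m => lam' m + lam' (m + 1)).Finite := by
    refine (hlamfin'.union hlamp').subset ?_
    intro m hm
    simp only [mem_union, mem_support] at *
    by_contra h
    push_neg at h
    apply hm
    rw [h.1, h.2]
    ring
  have hhatE : ∑ᶠ k : ℤ, lamhat (2 * k) = ∑ᶠ k : ℤ, lam' k := finsum_congr hhat_even
  have hhatO : ∑ᶠ m : ℤ, lamhat (2 * m + 1) = ∑ᶠ k : ℤ, lam' k := by
    have key : ∀ m : ℤ, lamhat (2 * m + 1) = (1/2) * (lam' m + lam' (m + 1)) := by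
      intro m
      have h22 : (2 : ℤ) * m + 2 = 2 * (m + 1) := by ring
      rw [hhat_odd, hhat_even, h22, hhat_even]
    calc ∑ᶠ m : ℤ, lamhat (2 * m + 1)
        = ∑ᶠ m : ℤ, (1/2) * (lam' m + lam' (m + 1)) := finsum_congr key
      _ = (1/2) * ∑ᶠ m : ℤ, (lam' m + lam' (m + 1)) := by
          rw [mul_finsum]
      _ = (1/2) * ((∑ᶠ k : ℤ, lam' k) + ∑ᶠ m : ℤ, lam' (m + 1)) := by
          rw [finsum_add_distrib hlamfin' hlamp']
      _ = ∑ᶠ k : ℤ, lam' k := by rw [wavelet_shift lam' 1]; ring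
  rw [wavelet_split lamhat hhatfin, wavelet_split lam hfin, hhatE, hhatO, hL]
  show _ = (∑ᶠ k : ℤ, A k) + ∑ᶠ m : ℤ, B m
  ring
end
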